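/- arXiv:2306.12196 — 4 statements merged into one kernel-verified Lean document; each statement's English description precedes it below -/
import Mathlib

section
/- Let M ∈ GL(n, F_2), let 1 ≤ i_1 < ... < i_k ≤ n, let u_1,...,u_k be the columns of M in positions i_1,...,i_k, and let u_0 ∈ F_2^n. Then the ANF coefficient of x_{i_1}···x_{i_k} in the function g(x) = f(Mx ⊕ u_0) equals ⊕_{c_1,...,c_k ∈ F_2} f((⊕_{j=1}^k c_j u_j) ⊕ u_0). -/
open Finset

def testSum (n k : ℕ) (f : (Fin n → ZMod 2) → ZMod 2)
    (u0 : Fin n → ZMod 2) (u : Fin k → Fin n → ZMod 2) : ZMod 2 :=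
  ∑ c : Fin k → ZMod 2, f (u0 + ∑ i, c i • u i)

noncomputable def dt (n k : ℕ) (f : (Fin n → ZMod 2) → ZMod 2) : ℝ :=
  ((univ.filter (fun p : (Fin n → ZMod 2) × (Fin k → Fin n → ZMod 2) =>
      testSum n k f p.1 p.2 ≠ 0)).card : ℝ) / 2 ^ ((k + 1) * n)

def anf (n : ℕ) (f : (Fin n → ZMod 2) → ZMod 2) (a : Fin n → ZMod 2) : ZMod 2 :=
  ∑ x ∈ univ.filter (fun x : Fin n → ZMod 2 => ∀ i, (x i).val ≤ (a i).val), f x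

def wt (n : ℕ) (a : Fin n → ZMod 2) : ℕ := (univ.filter fun i => a i = 1).card

def degree (n : ℕ) (f : (Fin n → ZMod 2) → ZMod 2) : ℕ :=
  (univ.filter fun a => anf n f a ≠ 0).sup (wt n)

def monom (n : ℕ) (a : Fin n → ZMod 2) (x : Fin n → ZMod 2) : ZMod 2 :=
  ∏ i ∈ univ.filter (fun i => a i = 1), x i

lemma zmod2_cases (z : ZMod 2) : z = 0 ∨ z = 1 := by revert z; decide

lemma filter_le_eq_piFinset (n : ℕ) (a : Fin n → ZMod 2) :
    (univ.filter (fun x : Fin n → ZMod 2 => ∀ i, (x i).val ≤ (a i).val)) =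
    Fintype.piFinset (fun i => if a i = 1 then (univ : Finset (ZMod 2)) else {0}) := by
  ext x
  simp only [mem_filter, mem_univ, true_and, Fintype.mem_piFinset]
  apply forall_congr'
  intro i
  rcases zmod2_cases (a i) with h | h <;> rcases zmod2_cases (x i) with h2 | h2 <;>
    simp [h, h2]

lemma sum_monom (n : ℕ) (a a' : Fin n → ZMod 2) :
    ∑ x ∈ univ.filter (fun x : Fin n → ZMod 2 => ∀ i, (x i).val ≤ (a i).val),
      monom n a' x = if a' = a then 1 else 0 := by
  rw [filter_le_eq_piFinset]
  have hm : ∀ x : Fin n → ZMod 2, monom n a' x = ∏ i, (if a' i = 1 then x i else 1) := by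
    intro x; rw [monom, prod_filter]
  simp_rw [hm]
  rw [← Finset.prod_univ_sum (fun i => if a i = 1 then (univ : Finset (ZMod 2)) else {0})
    (fun i y => if a' i = 1 then y else 1)]
  by_cases h : a' = a
  · subst h
    rw [if_pos rfl]
    apply Finset.prod_eq_one
    intro j _
    rcases zmod2_cases (a' j) with h1 | h1 <;> simp [h1] <;> decide
  · rw [if_neg h]
    obtain ⟨j, hj⟩ : ∃ j, a' j ≠ a j := by
      by_contra hc; push_neg at hc; exact h (funext hc)
    apply Finset.prod_eq_zero (mem_univ j)
    rcases zmod2_cases (a' j) with h1 | h1 <;> rcases zmod2_cases (a j) with h2 | h2 <;>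
      simp [h1, h2] at hj ⊢ <;> decide

lemma anf_inv (n : ℕ) (g : (Fin n → ZMod 2) → ZMod 2) (b : (Fin n → ZMod 2) → ZMod 2)
    (hb : ∀ x, g x = ∑ a, b a * monom n a x) (a : Fin n → ZMod 2) :
    b a = ∑ x ∈ univ.filter (fun x : Fin n → ZMod 2 => ∀ i, (x i).val ≤ (a i).val), g x := by
  simp_rw [hb]
  rw [Finset.sum_comm]
  simp_rw [← Finset.mul_sum, sum_monom, mul_ite, mul_one, mul_zero]
  simp

theorem anf_coeff_comp_affine (n k : ℕ) (f : (Fin n → ZMod 2) → ZMod 2)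
    (M : Matrix (Fin n) (Fin n) (ZMod 2)) (hM : IsUnit M.det)
    (i : Fin k → Fin n) (hi : StrictMono i) (u0 : Fin n → ZMod 2)
    (b : (Fin n → ZMod 2) → ZMod 2)
    (hb : ∀ x, f (M.mulVec x + u0) = ∑ a : Fin n → ZMod 2, b a * monom n a x) :
    b (fun p => if ∃ j, i j = p then 1 else 0)
      = testSum n k f u0 (fun j r => M r (i j)) := by
  set a0 : Fin n → ZMod 2 := fun p => if ∃ j, i j = p then 1 else 0 with ha0
  rw [anf_inv n (fun x => f (M.mulVec x + u0)) b hb a0]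
  rw [testSum]
  refine Finset.sum_nbij' (i := fun x => fun j => x (i j))
    (j := fun c => fun p => ∑ j, (if i j = p then c j else 0)) ?_ ?_ ?_ ?_ ?_
  · intro x hx; exact mem_univ _
  · intro c hc
    simp only [mem_filter, mem_univ, true_and]
    intro p
    by_cases hp : ∃ j, i j = p
    · have h1 : a0 p = 1 := by simp [ha0, hp]
      rw [h1]
      have h2 := ZMod.val_lt (∑ j, (if i j = p then c j else 0) : ZMod 2)
      have h3 : (1 : ZMod 2).val = 1 := rfl
      omega
    · have h1 : a0 p = 0 := by simp [ha0, hp]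
      have h2 : (∑ j, (if i j = p then c j else 0) : ZMod 2) = 0 := by
        apply Finset.sum_eq_zero; intro j _
        rw [if_neg (fun h => hp ⟨j, h⟩)]
      rw [h1, h2]
  · intro x hx
    simp only [mem_filter, mem_univ, true_and] at hx
    funext p
    by_cases hp : ∃ j, i j = p
    · obtain ⟨j0, hj0⟩ := hp
      subst hj0
      have hiff : ∀ j, i j = i j0 ↔ j = j0 := fun j => hi.injective.eq_iff
      simp only [hiff]
      rw [Finset.sum_ite_eq' univ j0 (fun j => x (i j))]
      simp
    · have h1 : a0 p = 0 := by simp [ha0, hp]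
      have h2 : x p = 0 := by
        have h3 := hx p
        rw [h1] at h3
        rcases zmod2_cases (x p) with h | h
        · exact h
        · rw [h] at h3; simp at h3
      rw [h2]
      apply Finset.sum_eq_zero; intro j _
      rw [if_neg (fun h => hp ⟨j, h⟩)]
  · intro c hc
    funext j0
    have hiff : ∀ j, i j = i j0 ↔ j = j0 := fun j => hi.injective.eq_iff
    simp only [hiff]
    rw [Finset.sum_ite_eq' univ j0 c]
    simp
  · intro x hx
    simp only [mem_filter, mem_univ, true_and] at hx
    have key : ∀ r, M.mulVec x r = ∑ j, M r (i j) * x (i j) := by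
      intro r
      have hvanish : ∀ p ∈ (univ : Finset (Fin n)), p ∉ univ.image i → M r p * x p = 0 := by
        intro p _ hp
        have hp' : ¬ ∃ j, i j = p := by
          intro ⟨j, hj⟩; exact hp (mem_image.2 ⟨j, mem_univ j, hj⟩)
        have h1 : a0 p = 0 := by simp [ha0, hp']
        have h2 : x p = 0 := by
          have h3 := hx p
          rw [h1] at h3
          rcases zmod2_cases (x p) with h | h
          · exact h
          · rw [h] at h3; simp at h3
        rw [h2, mul_zero]
      have hinj : ∀ a ∈ (univ : Finset (Fin k)), ∀ b ∈ (univ : Finset (Fin k)),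
          i a = i b → a = b := fun a _ b _ h => hi.injective h
      calc M.mulVec x r = ∑ p, M r p * x p := rfl
        _ = ∑ p ∈ univ.image i, M r p * x p :=
            (Finset.sum_subset (Finset.subset_univ _) hvanish).symm
        _ = ∑ j, M r (i j) * x (i j) := Finset.sum_image hinj
    congr 1
    funext r
    simp only [Pi.add_apply, Finset.sum_apply, Pi.smul_apply, smul_eq_mul]
    rw [key r, add_comm]
    congr 1
    apply Finset.sum_congr rfl
    intro j _
    ring
end

section
/- For k ≥ 1, dt_k(x_1 x_2 ··· x_k) = ∏_{i=1}^k (1 − 1/2^i), where the function is the single monomial x_1···x_k viewed as a Boolean function on F_2^n with n ≥ k. -/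
open Finset

lemma zmod2_mul_self : ∀ x : ZMod 2, x * x = x := by decide

lemma sum_zmod2_univ : ∑ x : ZMod 2, x = 1 := by decide

lemma sum_prod_eq_det (k : ℕ) (a : Fin k → ZMod 2) (M : Fin k → Fin k → ZMod 2) :
    ∑ c : Fin k → ZMod 2, ∏ j, (a j + ∑ i, c i * M i j)
      = (Matrix.of fun i j => M i j).det := by
  classical
  set w : Fin k → Option (Fin k) → ZMod 2 := fun j t => t.elim (a j) (fun i => M i j) with hw
  set e : Option (Fin k) → (Fin k → ZMod 2) → ZMod 2 := fun t c => t.elim 1 (fun i => c i) with he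
  have expand : ∀ c : Fin k → ZMod 2, ∀ j : Fin k,
      a j + ∑ i, c i * M i j = ∑ t ∈ (univ : Finset (Option (Fin k))), w j t * e t c := by
    intro c j
    rw [Fintype.sum_option]
    simp [w, e, mul_comm]
  have step1 : ∑ c : Fin k → ZMod 2, ∏ j, (a j + ∑ i, c i * M i j)
      = ∑ g : Fin k → Option (Fin k), (∏ j, w j (g j)) * ∑ c : Fin k → ZMod 2, ∏ j, e (g j) c := by
    simp_rw [expand, Finset.prod_univ_sum, Fintype.piFinset_univ]
    rw [Finset.sum_comm]
    refine Finset.sum_congr rfl fun g _ => ?_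
    rw [Finset.mul_sum]
    exact Finset.sum_congr rfl fun c _ => Finset.prod_mul_distrib
  rw [step1]
  -- split by surjectivity onto `some`
  rw [← Finset.sum_filter_add_sum_filter_not univ
    (fun g : Fin k → Option (Fin k) => ∀ i, ∃ j, g j = some i)]
  have hzero : ∑ g ∈ univ.filter
      (fun g : Fin k → Option (Fin k) => ¬ ∀ i, ∃ j, g j = some i),
      (∏ j, w j (g j)) * ∑ c : Fin k → ZMod 2, ∏ j, e (g j) c = 0 := by
    refine Finset.sum_eq_zero fun g hg => ?_
    simp only [Finset.mem_filter, Finset.mem_univ, true_and] at hg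
    push_neg at hg
    obtain ⟨i0, hi0⟩ := hg
    have hS : ∑ c : Fin k → ZMod 2, ∏ j, e (g j) c = 0 := by
      refine Finset.sum_ninvolution (fun c => Function.update c i0 (c i0 + 1)) ?_ ?_
        (fun _ => Finset.mem_univ _) ?_
      · intro c
        have : ∏ j, e (g j) (Function.update c i0 (c i0 + 1)) = ∏ j, e (g j) c := by
          refine Finset.prod_congr rfl fun j _ => ?_
          cases hgj : g j with
          | none => simp [e]
          | some i =>
            have : i ≠ i0 := fun h => hi0 j (h ▸ hgj)
            simp [e, Function.update_of_ne this]
        rw [this]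
        exact CharTwo.add_self_eq_zero _
      · intro c _
        intro h
        have := congrFun h i0
        simp at this
      · intro c
        funext j
        by_cases h : j = i0
        · subst h
          simp [Function.update_self]
          show c j + 1 + 1 = c j
          have : (1 : ZMod 2) + 1 = 0 := by decide
          rw [add_assoc, this, add_zero]
        · simp [Function.update_of_ne h]
    rw [hS, mul_zero]
  rw [hzero, add_zero]
  -- surjective g correspond to permutations
  rw [Matrix.det_apply]
  refine (Finset.sum_bij (fun (σ : Equiv.Perm (Fin k)) _ => (some ∘ ⇑σ : Fin k → Option (Fin k)))
    ?_ ?_ ?_ ?_).symm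
  · intro σ _
    simp only [Finset.mem_filter, Finset.mem_univ, true_and]
    intro i
    exact ⟨σ.symm i, by simp⟩
  · intro σ1 _ σ2 _ h
    refine Equiv.ext fun j => ?_
    simpa using congrFun h j
  · intro g hg
    simp only [Finset.mem_filter, Finset.mem_univ, true_and] at hg
    choose s hs using hg
    have hsinj : Function.Injective s := by
      intro i1 i2 h
      have := (hs i1).symm.trans (h ▸ hs i2)
      exact Option.some_injective _ this
    have hssurj : Function.Surjective s := (Finite.injective_iff_bijective.1 hsinj).2
    have hall : ∀ j, ∃ i, g j = some i := by
      intro j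
      obtain ⟨i, hi⟩ := hssurj j
      exact ⟨i, hi ▸ hs i⟩
    choose t ht using hall
    have htsurj : Function.Surjective t := by
      intro i
      refine ⟨s i, ?_⟩
      have := (ht (s i)).symm.trans (hs i)
      exact Option.some_injective _ this
    have htbij : Function.Bijective t := Finite.surjective_iff_bijective.1 htsurj
    refine ⟨Equiv.ofBijective t htbij, Finset.mem_univ _, ?_⟩
    funext j
    simp [Equiv.ofBijective, ht j]
  · intro σ _
    have hE : ∑ c : Fin k → ZMod 2, ∏ j, e ((some ∘ ⇑σ) j) c = 1 := by
      have : ∀ c : Fin k → ZMod 2, ∏ j, e ((some ∘ ⇑σ) j) c = ∏ i, c i := by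
        intro c
        show ∏ j, c (σ j) = ∏ i, c i
        exact Equiv.prod_comp σ c
      simp_rw [this]
      rw [← Fintype.piFinset_univ,
        Finset.sum_prod_piFinset (univ : Finset (ZMod 2)) (fun _ x => x)]
      simp [sum_zmod2_univ]
    have hW : ∏ j, w j ((some ∘ ⇑σ) j) = ∏ j, M (σ j) j := rfl
    rw [hE, hW, mul_one]
    have hsign : ∀ (u : ℤˣ) (x : ZMod 2), u • x = x := by
      intro u x
      rcases Int.units_eq_one_or u with h | h <;> subst h
      · simp
      · simp [Units.smul_def]
    rw [hsign]
    rfl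


def restEquiv (n k : ℕ) (hkn : k ≤ n) :
    (Fin k → Fin n → ZMod 2) ≃
      (Fin k → Fin k → ZMod 2) × (Fin k → {j : Fin n // ¬ j.val < k} → ZMod 2) where
  toFun u := (fun i j => u i (Fin.castLE hkn j), fun i j => u i j.1)
  invFun p := fun i j => if h : j.val < k then p.1 i ⟨j.val, h⟩ else p.2 i ⟨j, h⟩
  left_inv u := by
    funext i j
    by_cases h : j.val < k
    · simp only [dif_pos h]
      exact congrArg (u i) (by ext; rfl)
    · simp only [dif_neg h]
  right_inv p := by
    refine Prod.ext ?_ ?_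
    · funext i j
      simp only
      rw [dif_pos (by simpa using j.isLt)]
      exact congrArg (p.1 i) (by ext; rfl)
    · funext i j
      simp only
      rw [dif_neg j.2]

lemma card_filter_restrict (n k : ℕ) (hkn : k ≤ n)
    (R : (Fin k → Fin k → ZMod 2) → Prop) [DecidablePred R] :
    (univ.filter fun u : Fin k → Fin n → ZMod 2 =>
        R (fun i j => u i (Fin.castLE hkn j))).card
      = (univ.filter R).card * 2 ^ (k * (n - k)) := by
  classical
  rw [← Fintype.card_subtype, ← Fintype.card_subtype]
  have e1 : {u : Fin k → Fin n → ZMod 2 // R (fun i j => u i (Fin.castLE hkn j))}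
      ≃ {p : (Fin k → Fin k → ZMod 2) × (Fin k → {j : Fin n // ¬ j.val < k} → ZMod 2) // R p.1} :=
    (restEquiv n k hkn).subtypeEquiv (fun u => Iff.rfl)
  have e2 : {p : (Fin k → Fin k → ZMod 2) × (Fin k → {j : Fin n // ¬ j.val < k} → ZMod 2) // R p.1}
      ≃ {M : Fin k → Fin k → ZMod 2 // R M} × (Fin k → {j : Fin n // ¬ j.val < k} → ZMod 2) :=
    ⟨fun x => (⟨x.1.1, x.2⟩, x.1.2), fun y => ⟨(y.1.1, y.2), y.1.2⟩,
      fun x => rfl, fun y => rfl⟩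
  rw [Fintype.card_congr (e1.trans e2), Fintype.card_prod]
  congr 1
  have e3 : {j : Fin n // j.val < k} ≃ Fin k :=
    ⟨fun j => ⟨j.1.val, j.2⟩, fun i => ⟨⟨i.val, lt_of_lt_of_le i.isLt hkn⟩, i.isLt⟩,
      fun j => Subtype.ext (Fin.ext rfl), fun i => rfl⟩
  have hlt : Fintype.card {j : Fin n // j.val < k} = k := by
    rw [Fintype.card_congr e3, Fintype.card_fin]
  have hcard : Fintype.card {j : Fin n // ¬ j.val < k} = n - k := by
    rw [Fintype.card_subtype_compl, hlt, Fintype.card_fin]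
  rw [Fintype.card_fun, Fintype.card_fun, hcard, ZMod.card]
  rw [← pow_mul, Nat.mul_comm, Fintype.card_fin]

lemma card_det_ne_zero (k : ℕ) :
    (univ.filter fun M : Fin k → Fin k → ZMod 2 => (Matrix.of M).det ≠ 0).card
      = ∏ i : Fin k, (2 ^ k - 2 ^ (i : ℕ)) := by
  classical
  rw [← Fintype.card_subtype]
  have e : {M : Fin k → Fin k → ZMod 2 // (Matrix.of M).det ≠ 0}
      ≃ {s : Fin k → (Fin k → ZMod 2) // LinearIndependent (ZMod 2) s} :=
    Equiv.subtypeEquivRight (fun M => by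
      rw [← isUnit_iff_ne_zero, ← Matrix.isUnit_iff_isUnit_det]
      exact Matrix.linearIndependent_rows_iff_isUnit.symm)
  rw [Fintype.card_congr e, ← Nat.card_eq_fintype_card,
    card_linearIndependent (K := ZMod 2) (V := Fin k → ZMod 2)
      (by simp [Module.finrank_fintype_fun_eq_card])]
  simp [ZMod.card, Module.finrank_fintype_fun_eq_card]

theorem dt_single_monomial (n k : ℕ) (hk : 1 ≤ k) (hkn : k ≤ n) :
    dt n k (fun x => ∏ j : Fin k, x (Fin.castLE hkn j))
      = ∏ i ∈ Icc 1 k, (1 - 1 / 2 ^ i : ℝ) := by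
  classical
  have hfilter : ∀ (u0 : Fin n → ZMod 2) (u : Fin k → Fin n → ZMod 2),
      testSum n k (fun x => ∏ j : Fin k, x (Fin.castLE hkn j)) u0 u
        = (Matrix.of fun i j : Fin k => u i (Fin.castLE hkn j)).det := by
    intro u0 u
    rw [← sum_prod_eq_det k (fun j => u0 (Fin.castLE hkn j))
      (fun i j => u i (Fin.castLE hkn j))]
    unfold testSum
    refine Finset.sum_congr rfl fun c _ => ?_
    refine Finset.prod_congr rfl fun j _ => ?_
    simp [Finset.sum_apply, smul_eq_mul]
  have hset : (univ.filter (fun p : (Fin n → ZMod 2) × (Fin k → Fin n → ZMod 2) =>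
        testSum n k (fun x => ∏ j : Fin k, x (Fin.castLE hkn j)) p.1 p.2 ≠ 0))
      = univ ×ˢ (univ.filter fun u : Fin k → Fin n → ZMod 2 =>
          (Matrix.of fun i j : Fin k => u i (Fin.castLE hkn j)).det ≠ 0) := by
    ext p
    simp [Finset.mem_product, hfilter p.1 p.2]
  have hcount : (univ.filter (fun p : (Fin n → ZMod 2) × (Fin k → Fin n → ZMod 2) =>
        testSum n k (fun x => ∏ j : Fin k, x (Fin.castLE hkn j)) p.1 p.2 ≠ 0)).card
      = 2 ^ n * ((∏ i : Fin k, (2 ^ k - 2 ^ (i : ℕ))) * 2 ^ (k * (n - k))) := by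
    rw [hset, Finset.card_product, Finset.card_univ]
    rw [card_filter_restrict n k hkn (fun M => (Matrix.of M).det ≠ 0), card_det_ne_zero]
    congr 1
    simp [Fintype.card_fun, ZMod.card]
  unfold dt
  rw [hcount]
  clear hcount hset hfilter
  -- cast to ℝ
  have hprod : ∏ i : Fin k, (((2 ^ k - 2 ^ (i : ℕ) : ℕ)) : ℝ)
      = ∏ i : Fin k, ((2 : ℝ) ^ k - 2 ^ (i : ℕ)) := by
    refine Finset.prod_congr rfl fun i _ => ?_
    have h2 : (2 : ℕ) ^ (i : ℕ) ≤ 2 ^ k := Nat.pow_le_pow_right (by norm_num) (le_of_lt i.isLt)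
    rw [Nat.cast_sub h2]
    push_cast
    ring
  have hfac : ∀ i : Fin k, ((2 : ℝ) ^ k - 2 ^ (i : ℕ))
      = 2 ^ k * (1 - 1 / 2 ^ (k - (i : ℕ))) := by
    intro i
    have h2 : (2 : ℝ) ^ (i : ℕ) * 2 ^ (k - (i : ℕ)) = 2 ^ k := by
      rw [← pow_add, Nat.add_sub_cancel' (le_of_lt i.isLt)]
    have hne : (2 : ℝ) ^ (k - (i : ℕ)) ≠ 0 := by positivity
    field_simp
    linarith [h2]
  have hQ : ∏ i : Fin k, (1 - 1 / (2 : ℝ) ^ (k - (i : ℕ)))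
      = ∏ i ∈ Icc 1 k, (1 - 1 / 2 ^ i : ℝ) := by
    rw [Fin.prod_univ_eq_prod_range (fun i => 1 - 1 / (2 : ℝ) ^ (k - i)) k]
    rw [← Finset.Ico_add_one_right_eq_Icc, Finset.prod_Ico_eq_prod_range]
    rw [show k + 1 - 1 = k from rfl]
    rw [← Finset.prod_range_reflect (fun j => 1 - 1 / (2 : ℝ) ^ (1 + j)) k]
    refine Finset.prod_congr rfl fun i hi => ?_
    rw [Finset.mem_range] at hi
    show 1 - 1 / (2 : ℝ) ^ (k - i) = 1 - 1 / 2 ^ (1 + (k - 1 - i))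
    rw [show k - i = 1 + (k - 1 - i) from by omega]
  push_cast
  rw [show ∏ i : Fin k, (((2 ^ k - 2 ^ (i : ℕ) : ℕ)) : ℝ)
      = ∏ i : Fin k, ((2 : ℝ) ^ k - 2 ^ (i : ℕ)) from hprod]
  have : ∏ i : Fin k, ((2 : ℝ) ^ k - 2 ^ (i : ℕ))
      = 2 ^ (k * k) * ∏ i ∈ Icc 1 k, (1 - 1 / 2 ^ i : ℝ) := by
    rw [← hQ]
    calc ∏ i : Fin k, ((2 : ℝ) ^ k - 2 ^ (i : ℕ))
        = ∏ i : Fin k, (2 : ℝ) ^ k * (1 - 1 / 2 ^ (k - (i : ℕ))) :=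
          Finset.prod_congr rfl fun i _ => hfac i
      _ = (∏ _i : Fin k, (2 : ℝ) ^ k) * ∏ i : Fin k, (1 - 1 / (2 : ℝ) ^ (k - (i : ℕ))) :=
          Finset.prod_mul_distrib
      _ = 2 ^ (k * k) * ∏ i : Fin k, (1 - 1 / (2 : ℝ) ^ (k - (i : ℕ))) := by
          rw [Finset.prod_const, Finset.card_univ, Fintype.card_fin, ← pow_mul]
  rw [this]
  have hpow : (2 : ℝ) ^ n * 2 ^ (k * k) * 2 ^ (k * (n - k)) = 2 ^ ((k + 1) * n) := by
    have h1 : k * k + k * (n - k) = k * n := by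
      rw [← Nat.mul_add, Nat.add_sub_cancel' hkn]
    have h2 : (k + 1) * n = k * n + n := by ring
    have hexp : (k + 1) * n = n + k * k + k * (n - k) := by omega
    rw [hexp, pow_add, pow_add]
  rw [div_eq_iff (by positivity : ((2 : ℝ) ^ ((k + 1) * n)) ≠ 0), ← hpow]
  ring
end

section
/- Let f : F_2^n → F_2 have degree k ≥ 1. Then ∏_{i=1}^k (1 − 1/2^i) ≤ dt_k(f) ≤ (1/2)·(1 − 1/2^n)^{k−1}. -/
open Finset

namespace DTAux

lemma z_add_self : ∀ z : ZMod 2, z + z = 0 := by decide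

lemma z_cases : ∀ z : ZMod 2, z = 0 ∨ z = 1 := by decide

lemma sum_zmod2 {M : Type*} [AddCommMonoid M] (g : ZMod 2 → M) :
    ∑ ε : ZMod 2, g ε = g 0 + g 1 := by
  have h : (univ : Finset (ZMod 2)) = {0, 1} := by decide
  rw [h, Finset.sum_insert (by decide), Finset.sum_singleton]

lemma sum_snoc {M : Type*} [AddCommMonoid M] {m : ℕ} {β : Type*} [Fintype β]
    (F : (Fin (m + 1) → β) → M) :
    ∑ c : Fin (m + 1) → β, F c = ∑ d : Fin m → β, ∑ ε : β, F (Fin.snoc d ε) := by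
  rw [← (Fin.snocEquiv (fun _ => β)).sum_comp F, Fintype.sum_prod_type]
  rw [Finset.sum_comm]
  rfl

/-- core monomial cube lemma -/
lemma cube_monom {ι' : Type*} [DecidableEq ι'] :
    ∀ (m : ℕ) (S : Finset ι') (A : ι' → ZMod 2) (B : ι' → Fin m → ZMod 2),
      S.card < m →
      ∑ c : Fin m → ZMod 2, ∏ t ∈ S, (A t + ∑ j, B t j * c j) = 0 := by
  intro m
  induction m with
  | zero => intro S A B h; omega
  | succ m ih =>
    intro S A B h
    rw [sum_snoc]
    have hsplit : ∀ (d : Fin m → ZMod 2) (ε : ZMod 2) (t : ι'),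
        A t + ∑ j, B t j * (Fin.snoc d ε : Fin (m+1) → ZMod 2) j
          = (A t + ∑ j : Fin m, B t j.castSucc * d j) + B t (Fin.last m) * ε := by
      intro d ε t
      rw [Fin.sum_univ_castSucc]
      simp [add_assoc]
    have hstep : ∀ d : Fin m → ZMod 2,
        (∑ ε : ZMod 2, ∏ t ∈ S, (A t + ∑ j, B t j * (Fin.snoc d ε : Fin (m+1) → ZMod 2) j))
        = ∑ T ∈ S.powerset.erase S,
            (∏ t ∈ T, (A t + ∑ j : Fin m, B t j.castSucc * d j)) *
              ∏ t ∈ S \ T, B t (Fin.last m) := by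
      intro d
      rw [sum_zmod2]
      simp only [hsplit, mul_zero, add_zero, mul_one]
      rw [Finset.prod_add (fun t => A t + ∑ j : Fin m, B t j.castSucc * d j)
        (fun t => B t (Fin.last m)) S,
        ← Finset.add_sum_erase _ _ (Finset.mem_powerset_self S)]
      rw [sdiff_self, Finset.bot_eq_empty, Finset.prod_empty, mul_one, ← add_assoc, z_add_self, zero_add]
    simp only [hstep]
    rw [Finset.sum_comm]
    refine Finset.sum_eq_zero fun T hT => ?_
    rw [Finset.mem_erase, Finset.mem_powerset] at hT
    have hTcard : T.card < m := by
      have h1 : T.card < S.card := Finset.card_lt_card (lt_of_le_of_ne hT.2 hT.1)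
      omega
    rw [← Finset.sum_mul, ih T A (fun t j => B t j.castSucc) hTcard, zero_mul]

lemma zval1 : ∀ z w : ZMod 2, z = 1 → z.val ≤ w.val → w = 1 := by decide
lemma zval2 : ∀ z w : ZMod 2, w.val < z.val → z = 1 ∧ w = 0 := by decide
lemma zval3 : ∀ z w : ZMod 2, z.val ≤ w.val → w.val ≤ z.val → z = w := by decide
lemma zval4 : ∀ z w : ZMod 2, z.val ≤ w.val → z ≠ w → z = 0 ∧ w = 1 := by decide
lemma zval5 : ∀ z w : ZMod 2, z = 0 → z.val ≤ w.val := by decide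
lemma zval6 : ∀ z w : ZMod 2, w = 1 → z.val ≤ w.val := by decide
lemma zne1 : ∀ z : ZMod 2, z + 1 ≠ z := by decide
lemma zpp : ∀ z : ZMod 2, z + 1 + 1 = z := by decide

lemma monom_eq (n : ℕ) (a x : Fin n → ZMod 2) :
    monom n a x = if (∀ i, (a i).val ≤ (x i).val) then 1 else 0 := by
  unfold monom
  split
  · next h =>
    refine Finset.prod_eq_one fun i hi => ?_
    exact zval1 _ _ (Finset.mem_filter.1 hi).2 (h i)
  · next h =>
    push_neg at h
    obtain ⟨i, hi⟩ := h
    obtain ⟨ha, hx⟩ := zval2 (a i) (x i) hi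
    exact Finset.prod_eq_zero (Finset.mem_filter.2 ⟨Finset.mem_univ _, ha⟩) hx

lemma interval_count (n : ℕ) (x y : Fin n → ZMod 2) :
    ∑ a : Fin n → ZMod 2,
      (if ((∀ i, (y i).val ≤ (a i).val) ∧ (∀ i, (a i).val ≤ (x i).val)) then (1 : ZMod 2) else 0)
      = if y = x then 1 else 0 := by
  by_cases hyx : y = x
  · subst hyx; rw [if_pos rfl]
    have hiff : ∀ a : Fin n → ZMod 2,
        ((∀ i, (y i).val ≤ (a i).val) ∧ (∀ i, (a i).val ≤ (y i).val)) ↔ a = y := by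
      intro a
      constructor
      · rintro ⟨h1, h2⟩; funext i; exact zval3 _ _ (h2 i) (h1 i)
      · rintro rfl; exact ⟨fun i => le_refl _, fun i => le_refl _⟩
    simp only [hiff]
    simp
  · rw [if_neg hyx]
    by_cases hle : ∀ i, (y i).val ≤ (x i).val
    · have hne : ∃ i0, y i0 ≠ x i0 := by
        by_contra hc; push_neg at hc; exact hyx (funext hc)
      obtain ⟨i0, hi0⟩ := hne
      obtain ⟨hy0, hx1⟩ := zval4 _ _ (hle i0) hi0
      set P : (Fin n → ZMod 2) → Prop :=
        fun a => ((∀ i, (y i).val ≤ (a i).val) ∧ (∀ i, (a i).val ≤ (x i).val)) with hP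
      have hPiff : ∀ a, P (Function.update a i0 (a i0 + 1)) ↔ P a := by
        intro a
        constructor
        · rintro ⟨h1, h2⟩
          refine ⟨fun i => ?_, fun i => ?_⟩
          · rcases eq_or_ne i i0 with rfl | hne
            · exact zval5 _ _ hy0
            · have := h1 i; rwa [Function.update_of_ne hne] at this
          · rcases eq_or_ne i i0 with rfl | hne
            · exact zval6 _ _ hx1
            · have := h2 i; rwa [Function.update_of_ne hne] at this
        · rintro ⟨h1, h2⟩
          refine ⟨fun i => ?_, fun i => ?_⟩
          · rcases eq_or_ne i i0 with rfl | hne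
            · rw [Function.update_self]; exact zval5 _ _ hy0
            · rw [Function.update_of_ne hne]; exact h1 i
          · rcases eq_or_ne i i0 with rfl | hne
            · rw [Function.update_self]; exact zval6 _ _ hx1
            · rw [Function.update_of_ne hne]; exact h2 i
      refine Finset.sum_involution (fun a _ => Function.update a i0 (a i0 + 1)) ?_ ?_ ?_ ?_
      · intro a ha
        by_cases hpa : P a
        · rw [if_pos hpa, if_pos ((hPiff a).2 hpa)]; exact z_add_self 1
        · rw [if_neg hpa, if_neg (fun hq => hpa ((hPiff a).1 hq))]; exact z_add_self 0
      · intro a ha _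
        intro hc
        have := congrFun hc i0
        simp only [Function.update_self] at this
        exact zne1 _ this
      · intro a ha; exact Finset.mem_univ _
      · intro a ha
        funext i
        rcases eq_or_ne i i0 with rfl | hne
        · simp [Function.update_idem, Function.update_self, zpp]
        · simp [Function.update_of_ne hne]
    · refine Finset.sum_eq_zero fun a _ => ?_
      rw [if_neg]
      rintro ⟨h1, h2⟩
      exact hle fun i => le_trans (h1 i) (h2 i)

lemma inversion (n : ℕ) (f : (Fin n → ZMod 2) → ZMod 2) (x : Fin n → ZMod 2) :
    f x = ∑ a, anf n f a * monom n a x := by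
  have h1 : ∀ a : Fin n → ZMod 2,
      anf n f a = ∑ y, if (∀ i, (y i).val ≤ (a i).val) then f y else 0 := by
    intro a; exact Finset.sum_filter _ _
  calc f x = ∑ y : Fin n → ZMod 2, (if y = x then (1 : ZMod 2) else 0) * f y := by simp
    _ = ∑ y : Fin n → ZMod 2, (∑ a : Fin n → ZMod 2,
          (if ((∀ i, (y i).val ≤ (a i).val) ∧ (∀ i, (a i).val ≤ (x i).val))
            then (1 : ZMod 2) else 0)) * f y := by
        simp_rw [interval_count]
    _ = ∑ y : Fin n → ZMod 2, ∑ a : Fin n → ZMod 2,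
          (if ((∀ i, (y i).val ≤ (a i).val) ∧ (∀ i, (a i).val ≤ (x i).val))
            then (1 : ZMod 2) else 0) * f y := by
        simp_rw [Finset.sum_mul]
    _ = ∑ a : Fin n → ZMod 2, ∑ y : Fin n → ZMod 2,
          (if (∀ i, (y i).val ≤ (a i).val) then f y else 0) *
            (if (∀ i, (a i).val ≤ (x i).val) then 1 else 0) := by
        rw [Finset.sum_comm]
        refine Finset.sum_congr rfl fun a _ => Finset.sum_congr rfl fun y _ => ?_
        split_ifs with h1' h2' h3' <;> simp_all
    _ = ∑ a, anf n f a * monom n a x := by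
        simp_rw [h1, monom_eq, Finset.sum_mul]
lemma zsolve : ∀ sx sa sb sab : ZMod 2, sx + sa + sb + sab = 0 →
    sx + sab = (sx + sa) + (sx + sb) := by decide
lemma zsolve' : ∀ sx sa sb sab : ZMod 2, sx + sa + (sb + sab) = 0 →
    sx + sab = (sx + sa) + (sx + sb) := by decide
lemma zeq : ∀ x y : ZMod 2, x + y = 0 → x = y := by decide
lemma zval7 : ∀ z w : ZMod 2, w = 0 → z.val ≤ w.val → z = 0 := by decide

lemma cube_zero (n k : ℕ) (f : (Fin n → ZMod 2) → ZMod 2)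
    (hwt : ∀ a, anf n f a ≠ 0 → wt n a ≤ k) {m : ℕ} (hm : k < m)
    (w : Fin m → Fin n → ZMod 2) (u0 : Fin n → ZMod 2) :
    ∑ c : Fin m → ZMod 2, f (u0 + ∑ i, c i • w i) = 0 := by
  have hrw : ∀ c : Fin m → ZMod 2,
      f (u0 + ∑ i, c i • w i) = ∑ a, anf n f a * monom n a (u0 + ∑ i, c i • w i) :=
    fun c => inversion n f _
  simp_rw [hrw]
  rw [Finset.sum_comm]
  refine Finset.sum_eq_zero fun a _ => ?_
  by_cases ha : anf n f a = 0
  · simp [ha]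
  · rw [← Finset.mul_sum]
    have hcard : (univ.filter fun i => a i = 1).card < m := lt_of_le_of_lt (hwt a ha) hm
    have hmon : ∀ c : Fin m → ZMod 2, monom n a (u0 + ∑ i, c i • w i)
        = ∏ t ∈ univ.filter (fun i => a i = 1), (u0 t + ∑ j, w j t * c j) := by
      intro c
      unfold monom
      refine Finset.prod_congr rfl fun t _ => ?_
      simp [Finset.sum_apply, mul_comm]
    simp_rw [hmon]
    rw [cube_monom m _ (fun t => u0 t) (fun t j => w j t) hcard, mul_zero]

lemma testSum_indep (n k : ℕ) (f : (Fin n → ZMod 2) → ZMod 2)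
    (hwt : ∀ a, anf n f a ≠ 0 → wt n a ≤ k)
    (u0 : Fin n → ZMod 2) (u : Fin k → Fin n → ZMod 2) :
    testSum n k f u0 u = testSum n k f 0 u := by
  have h := cube_zero n k f hwt (Nat.lt_succ_self k) (Fin.snoc u u0) 0
  rw [sum_snoc] at h
  have hsp : ∀ (d : Fin k → ZMod 2) (ε : ZMod 2),
      ((0 : Fin n → ZMod 2) + ∑ i, (Fin.snoc d ε : Fin (k+1) → ZMod 2) i •
          (Fin.snoc u u0 : Fin (k+1) → Fin n → ZMod 2) i)
        = ε • u0 + ∑ i, d i • u i := by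
    intro d ε
    rw [zero_add, Fin.sum_univ_castSucc]
    simp [add_comm]
  simp_rw [hsp, sum_zmod2, zero_smul, one_smul, zero_add] at h
  rw [Finset.sum_add_distrib] at h
  have := zeq _ _ h
  unfold testSum
  rw [← this]
  refine Finset.sum_congr rfl fun c _ => ?_
  rw [zero_add]

lemma testSum_perm (n k : ℕ) (f : (Fin n → ZMod 2) → ZMod 2)
    (u : Fin k → Fin n → ZMod 2) (σ : Equiv.Perm (Fin k)) :
    testSum n k f 0 (u ∘ σ) = testSum n k f 0 u := by
  unfold testSum
  have hin : ∀ c : Fin k → ZMod 2, ∑ i, c i • (u ∘ σ) i = ∑ i, (c ∘ σ.symm) i • u i := by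
    intro c
    rw [← Equiv.sum_comp σ (fun i => (c ∘ σ.symm) i • u i)]
    simp
  simp_rw [hin]
  refine Fintype.sum_equiv (Equiv.arrowCongr σ (Equiv.refl (ZMod 2))) _ _ fun c => ?_
  simp [Equiv.arrowCongr]

lemma testSum_snoc_eq (n m : ℕ) (f : (Fin n → ZMod 2) → ZMod 2)
    (w : Fin m → Fin n → ZMod 2) (v : Fin n → ZMod 2) :
    testSum n (m+1) f 0 (Fin.snoc w v) =
      ∑ d : Fin m → ZMod 2, (f (∑ i, d i • w i) + f ((∑ i, d i • w i) + v)) := by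
  unfold testSum
  rw [sum_snoc]
  refine Finset.sum_congr rfl fun d _ => ?_
  have hsp : ∀ ε : ZMod 2,
      ((0 : Fin n → ZMod 2) + ∑ i, (Fin.snoc d ε : Fin (m+1) → ZMod 2) i •
          (Fin.snoc w v : Fin (m+1) → Fin n → ZMod 2) i)
        = (∑ i, d i • w i) + ε • v := by
    intro ε
    rw [zero_add, Fin.sum_univ_castSucc]
    simp
  simp_rw [hsp, sum_zmod2, zero_smul, one_smul, add_zero]

lemma testSum_snoc_add (n m : ℕ) (f : (Fin n → ZMod 2) → ZMod 2)
    (hwt : ∀ a, anf n f a ≠ 0 → wt n a ≤ m + 1)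
    (w : Fin m → Fin n → ZMod 2) (a b : Fin n → ZMod 2) :
    testSum n (m+1) f 0 (Fin.snoc w (a + b)) =
      testSum n (m+1) f 0 (Fin.snoc w a) + testSum n (m+1) f 0 (Fin.snoc w b) := by
  have h := cube_zero n (m+1) f hwt (Nat.lt_succ_self (m+1))
      (Fin.snoc (Fin.snoc w a) b) 0
  rw [sum_snoc] at h
  have hsp1 : ∀ (d : Fin (m+1) → ZMod 2) (δ : ZMod 2),
      ((0 : Fin n → ZMod 2) + ∑ i, (Fin.snoc d δ : Fin (m+2) → ZMod 2) i •
          (Fin.snoc (Fin.snoc w a) b : Fin (m+2) → Fin n → ZMod 2) i)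
        = (0 + ∑ i, d i • (Fin.snoc w a : Fin (m+1) → Fin n → ZMod 2) i) + δ • b := by
    intro d δ
    rw [Fin.sum_univ_castSucc]
    simp [add_assoc]
  simp_rw [hsp1] at h
  rw [sum_snoc] at h
  have hsp2 : ∀ (e : Fin m → ZMod 2) (ε δ : ZMod 2),
      ((0 + ∑ i, (Fin.snoc e ε : Fin (m+1) → ZMod 2) i •
          (Fin.snoc w a : Fin (m+1) → Fin n → ZMod 2) i) + δ • b)
        = ((∑ i, e i • w i) + ε • a) + δ • b := by
    intro e ε δ
    rw [zero_add, Fin.sum_univ_castSucc]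
    simp
  simp_rw [hsp2, sum_zmod2, zero_smul, one_smul, add_zero] at h
  -- h : ∑ e, ((f (ρ e) + f (ρ e + b)) + (f (ρ e + a) + f ((ρ e + a) + b))) = 0
  have hre : ∀ e : Fin m → ZMod 2,
      ((f ((∑ i, e i • w i)) + f ((∑ i, e i • w i) + b)) +
        (f ((∑ i, e i • w i) + a) + f (((∑ i, e i • w i) + a) + b)))
      = ((f ((∑ i, e i • w i)) + f ((∑ i, e i • w i) + a)) +
          (f ((∑ i, e i • w i) + b) + f ((∑ i, e i • w i) + (a + b)))) := by
    intro e
    rw [add_assoc ((∑ i, e i • w i)) a b]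
    ring
  rw [Finset.sum_congr rfl (fun e _ => hre e)] at h
  rw [Finset.sum_add_distrib, Finset.sum_add_distrib, Finset.sum_add_distrib] at h
  rw [testSum_snoc_eq, testSum_snoc_eq, testSum_snoc_eq,
    Finset.sum_add_distrib, Finset.sum_add_distrib, Finset.sum_add_distrib]
  exact zsolve' _ _ _ _ h
lemma zidem : ∀ x : ZMod 2, x = x + x → x = 0 := by decide

lemma update_last_eq_snoc {m : ℕ} {β : Type*} (g : Fin (m+1) → β) (v : β) :
    Function.update g (Fin.last m) v = Fin.snoc (Fin.init g) v := by
  funext i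
  induction i using Fin.lastCases with
  | last => rw [Function.update_self, Fin.snoc_last]
  | cast i =>
    rw [Function.update_of_ne (Fin.castSucc_lt_last _).ne, Fin.snoc_castSucc]
    rfl

lemma testSum_update_add (n k : ℕ) (f : (Fin n → ZMod 2) → ZMod 2)
    (hwt : ∀ a, anf n f a ≠ 0 → wt n a ≤ k) (hk : k ≠ 0)
    (u : Fin k → Fin n → ZMod 2) (j : Fin k) (a b : Fin n → ZMod 2) :
    testSum n k f 0 (Function.update u j (a + b)) =
      testSum n k f 0 (Function.update u j a) + testSum n k f 0 (Function.update u j b) := by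
  obtain ⟨m, rfl⟩ : ∃ m, k = m + 1 := ⟨k - 1, by omega⟩
  set σ := Equiv.swap j (Fin.last m) with hσ
  have hup : ∀ v, Function.update u j v =
      (Function.update (u ∘ σ) (Fin.last m) v) ∘ σ := by
    intro v; funext x
    have hcomp : (Function.update (u ∘ ⇑σ) (Fin.last m) v ∘ ⇑σ) x
        = Function.update (u ∘ ⇑σ) (Fin.last m) v (σ x) := rfl
    rcases eq_or_ne x j with rfl | hx
    · rw [Function.update_self, hcomp, Equiv.swap_apply_left, Function.update_self]
    · have hσx : σ x ≠ Fin.last m := by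
        intro hc
        apply hx
        have h2 := congrArg σ hc
        rwa [Equiv.swap_apply_self, Equiv.swap_apply_right] at h2
      rw [Function.update_of_ne hx, hcomp, Function.update_of_ne hσx,
        Function.comp_apply, Equiv.swap_apply_self]
  have hC : ∀ v, testSum n (m+1) f 0 (Function.update u j v)
      = testSum n (m+1) f 0 (Fin.snoc (Fin.init (u ∘ σ)) v) := by
    intro v
    rw [hup v, testSum_perm, update_last_eq_snoc]
  rw [hC (a+b), hC a, hC b]
  exact testSum_snoc_add n m f hwt _ a b

lemma testSum_update_zero (n k : ℕ) (f : (Fin n → ZMod 2) → ZMod 2)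
    (hwt : ∀ a, anf n f a ≠ 0 → wt n a ≤ k) (hk : k ≠ 0)
    (u : Fin k → Fin n → ZMod 2) (j : Fin k) :
    testSum n k f 0 (Function.update u j 0) = 0 := by
  have h := testSum_update_add n k f hwt hk u j 0 0
  rw [add_zero] at h
  exact zidem _ h

lemma testSum_alt (n k : ℕ) (f : (Fin n → ZMod 2) → ZMod 2)
    (u : Fin k → Fin n → ZMod 2) (p q : Fin k) (hpq : p ≠ q) (hu : u p = u q) :
    testSum n k f 0 u = 0 := by
  unfold testSum
  set ι : (Fin k → ZMod 2) → (Fin k → ZMod 2) :=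
    fun c => Function.update (Function.update c p (c p + 1)) q (c q + 1) with hι
  have hevq : ∀ c, ι c q = c q + 1 := fun c => Function.update_self _ _ _
  have hevp : ∀ c, ι c p = c p + 1 := by
    intro c
    rw [hι]
    simp only []
    rw [Function.update_of_ne hpq, Function.update_self]
  have hevo : ∀ c i, i ≠ p → i ≠ q → ι c i = c i := by
    intro c i hip hiq
    rw [hι]
    simp only []
    rw [Function.update_of_ne hiq, Function.update_of_ne hip]
  have hq' : q ∈ (univ : Finset (Fin k)).erase p := by
    simp [Finset.mem_erase, hpq]
    exact fun h => hpq h.symm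
  have harg : ∀ c : Fin k → ZMod 2, ∑ i, ι c i • u i = ∑ i, c i • u i := by
    intro c
    rw [← Finset.add_sum_erase _ _ (Finset.mem_univ p), ← Finset.add_sum_erase _ _ hq']
    rw [← Finset.add_sum_erase _ (fun i => c i • u i) (Finset.mem_univ p),
      ← Finset.add_sum_erase _ (fun i => c i • u i) hq']
    have hR : ∑ i ∈ (univ.erase p).erase q, ι c i • u i
        = ∑ i ∈ (univ.erase p).erase q, c i • u i := by
      refine Finset.sum_congr rfl fun i hi => ?_
      rw [Finset.mem_erase, Finset.mem_erase] at hi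
      rw [hevo c i hi.2.1 hi.1]
    rw [hR, hevp, hevq, hu]
    set v := u q
    have vv : v + v = 0 := funext fun t => z_add_self _
    rw [add_smul, add_smul, one_smul]
    rw [show c p • v + v + (c q • v + v + ∑ i ∈ (univ.erase p).erase q, c i • u i)
        = c p • v + (c q • v + ((v + v) + ∑ i ∈ (univ.erase p).erase q, c i • u i)) from by abel,
      vv, zero_add]
  refine Finset.sum_involution (fun c _ => ι c) ?_ ?_ ?_ ?_
  · intro c _
    rw [harg c]
    exact z_add_self _
  · intro c _ _ hc
    have h := congrFun hc q
    simp only [hevq] at h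
    exact zne1 _ h
  · intro c _; exact Finset.mem_univ _
  · intro c _
    funext i
    show ι (ι c) i = c i
    rcases eq_or_ne i p with rfl | hip
    · rw [hevp, hevp, zpp]
    · rcases eq_or_ne i q with rfl | hiq
      · rw [hevq, hevq, zpp]
      · rw [hevo _ _ hip hiq, hevo _ _ hip hiq]

lemma degree_le (n k : ℕ) (f : (Fin n → ZMod 2) → ZMod 2) (hdeg : degree n f = k) :
    ∀ a, anf n f a ≠ 0 → wt n a ≤ k := by
  intro a ha
  rw [← hdeg]
  exact Finset.le_sup (Finset.mem_filter.2 ⟨Finset.mem_univ _, ha⟩)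

lemma degree_attained (n k : ℕ) (f : (Fin n → ZMod 2) → ZMod 2)
    (hdeg : degree n f = k) (hk : 1 ≤ k) :
    ∃ a, anf n f a ≠ 0 ∧ wt n a = k := by
  have hne : (univ.filter fun a : Fin n → ZMod 2 => anf n f a ≠ 0).Nonempty := by
    by_contra hc
    rw [Finset.not_nonempty_iff_eq_empty] at hc
    unfold degree at hdeg
    rw [hc] at hdeg
    simp at hdeg
    omega
  obtain ⟨a, ha, heq⟩ := Finset.exists_mem_eq_sup _ hne (wt n)
  exact ⟨a, (Finset.mem_filter.1 ha).2, by rw [← heq, ← hdeg]; rfl⟩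

lemma testSum_basis (n k : ℕ) (f : (Fin n → ZMod 2) → ZMod 2)
    (a : Fin n → ZMod 2) (hcard : (univ.filter fun i => a i = 1).card = k) :
    ∃ u, testSum n k f 0 u = anf n f a := by
  set S := univ.filter fun i : Fin n => a i = 1 with hS
  set g : Fin k → Fin n := fun i => (S.orderIsoOfFin hcard i : Fin n) with hg
  have hginj : Function.Injective g := fun i j h =>
    (S.orderIsoOfFin hcard).injective (Subtype.ext h)
  have hgmem : ∀ i, a (g i) = 1 := fun i =>
    (Finset.mem_filter.1 (S.orderIsoOfFin hcard i).2).2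
  have hgsurj : ∀ t, a t = 1 → ∃ i, g i = t := by
    intro t ht
    refine ⟨(S.orderIsoOfFin hcard).symm ⟨t, Finset.mem_filter.2 ⟨Finset.mem_univ _, ht⟩⟩, ?_⟩
    rw [hg]
    simp
  set u : Fin k → Fin n → ZMod 2 := fun i t => if t = g i then 1 else 0 with hu
  have hX : ∀ (c : Fin k → ZMod 2) (t : Fin n),
      (∑ i, c i • u i) t = ∑ i, (if t = g i then c i else 0) := by
    intro c t
    rw [Finset.sum_apply]
    refine Finset.sum_congr rfl fun i _ => ?_
    rw [hu]
    simp only [Pi.smul_apply, smul_eq_mul]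
    split_ifs <;> simp
  have hXg : ∀ (c : Fin k → ZMod 2) (i : Fin k), (∑ i, c i • u i) (g i) = c i := by
    intro c i
    rw [hX]
    have : ∀ j, (if g i = g j then c j else 0) = if j = i then c j else 0 := by
      intro j
      rcases eq_or_ne j i with rfl | hji
      · simp
      · rw [if_neg (fun h => hji (hginj h.symm)), if_neg hji]
    simp_rw [this]
    simp
  have hX0 : ∀ (c : Fin k → ZMod 2) (t : Fin n), a t ≠ 1 → (∑ i, c i • u i) t = 0 := by
    intro c t ht
    rw [hX]
    refine Finset.sum_eq_zero fun i _ => ?_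
    rw [if_neg]
    intro hc
    exact ht (hc ▸ hgmem i)
  refine ⟨u, ?_⟩
  unfold testSum anf
  refine Finset.sum_nbij' (i := fun c => (0 : Fin n → ZMod 2) + ∑ i, c i • u i)
    (j := fun x i => x (g i)) ?_ ?_ ?_ ?_ ?_
  · intro c _
    simp only [zero_add]
    refine Finset.mem_filter.2 ⟨Finset.mem_univ _, fun t => ?_⟩
    rcases z_cases (a t) with h0 | h1
    · exact zval5 _ _ (hX0 c t (by rw [h0]; decide))
    · exact zval6 _ _ h1
  · intro x _; exact Finset.mem_univ _
  · intro c _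
    simp only [zero_add]
    funext i
    exact hXg c i
  · intro x hx
    simp only [zero_add]
    funext t
    rcases z_cases (a t) with h0 | h1
    · have hxt : x t = 0 :=
        zval7 _ _ h0 ((Finset.mem_filter.1 hx).2 t)
      rw [hxt, hX0 _ t (by rw [h0]; decide)]
    · obtain ⟨i, hgi⟩ := hgsurj t h1
      rw [← hgi]
      exact hXg _ i
  · intro c _
    rfl
lemma card_V (n : ℕ) : Fintype.card (Fin n → ZMod 2) = 2 ^ n := by
  simp

def alive (n k : ℕ) (f : (Fin n → ZMod 2) → ZMod 2) (j : ℕ) (hj : j ≤ k)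
    (w : Fin j → Fin n → ZMod 2) : Prop :=
  ∃ v : Fin k → Fin n → ZMod 2,
    (∀ i : Fin j, v (Fin.castLE hj i) = w i) ∧ testSum n k f 0 v ≠ 0

instance alive_dec (n k : ℕ) (f : (Fin n → ZMod 2) → ZMod 2) (j : ℕ) (hj : j ≤ k) :
    DecidablePred (alive n k f j hj) := fun w => by unfold alive; infer_instance

def qq (n k : ℕ) (f : (Fin n → ZMod 2) → ZMod 2) (j : ℕ) (hj : j ≤ k) : ℕ :=
  (univ.filter (alive n k f j hj)).card

lemma q_zero (n k : ℕ) (f : (Fin n → ZMod 2) → ZMod 2) (h0 : 0 ≤ k)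
    (hex : ∃ v, testSum n k f 0 v ≠ 0) : qq n k f 0 h0 = 1 := by
  unfold qq
  have hall : ∀ w : Fin 0 → Fin n → ZMod 2, alive n k f 0 h0 w := by
    intro w
    obtain ⟨v, hv⟩ := hex
    exact ⟨v, fun i => i.elim0, hv⟩
  rw [Finset.filter_true_of_mem (fun w _ => hall w), Finset.card_univ]
  simp

lemma q_k (n k : ℕ) (f : (Fin n → ZMod 2) → ZMod 2) (hkk : k ≤ k) :
    qq n k f k hkk =
      (univ.filter fun v : Fin k → Fin n → ZMod 2 => testSum n k f 0 v ≠ 0).card := by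
  unfold qq
  congr 1
  apply Finset.filter_congr
  intro v _
  have hcast : ∀ i : Fin k, Fin.castLE hkk i = i := fun i => Fin.ext rfl
  constructor
  · rintro ⟨v', hv', hne⟩
    have : v' = v := by funext i; rw [← hcast i]; exact hv' i
    rwa [← this]
  · intro hne
    exact ⟨v, fun i => by rw [hcast], hne⟩

lemma alive_snoc_iff (n k : ℕ) (f : (Fin n → ZMod 2) → ZMod 2) {j : ℕ} (hjk : j < k)
    (w : Fin j → Fin n → ZMod 2) (v : Fin n → ZMod 2) :
    alive n k f (j+1) hjk (Fin.snoc w v) ↔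
      ∃ u : Fin k → Fin n → ZMod 2,
        (∀ i : Fin j, u (Fin.castLE hjk.le i) = w i) ∧ u ⟨j, hjk⟩ = v ∧
          testSum n k f 0 u ≠ 0 := by
  have hlast : (Fin.castLE (show j+1 ≤ k from hjk) (Fin.last j)) = (⟨j, hjk⟩ : Fin k) :=
    Fin.ext rfl
  have hcs : ∀ i : Fin j,
      Fin.castLE (show j+1 ≤ k from hjk) i.castSucc = Fin.castLE hjk.le i :=
    fun i => Fin.ext rfl
  constructor
  · rintro ⟨u, hu, hne⟩
    refine ⟨u, fun i => ?_, ?_, hne⟩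
    · have := hu i.castSucc
      rwa [hcs, Fin.snoc_castSucc] at this
    · have := hu (Fin.last j)
      rwa [hlast, Fin.snoc_last] at this
  · rintro ⟨u, hpre, hjv, hne⟩
    refine ⟨u, fun i => ?_, hne⟩
    induction i using Fin.lastCases with
    | last => rw [hlast, Fin.snoc_last]; exact hjv
    | cast i => rw [hcs, Fin.snoc_castSucc]; exact hpre i

lemma alive_snoc_implies (n k : ℕ) (f : (Fin n → ZMod 2) → ZMod 2) {j : ℕ} (hjk : j < k)
    (w : Fin j → Fin n → ZMod 2) (v : Fin n → ZMod 2)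
    (h : alive n k f (j+1) hjk (Fin.snoc w v)) : alive n k f j hjk.le w := by
  rw [alive_snoc_iff] at h
  obtain ⟨u, hpre, _, hne⟩ := h
  exact ⟨u, hpre, hne⟩

lemma step_split (n k : ℕ) (f : (Fin n → ZMod 2) → ZMod 2) {j : ℕ} (hjk : j < k) :
    qq n k f (j+1) hjk = ∑ w : Fin j → Fin n → ZMod 2,
      (univ.filter fun v : Fin n → ZMod 2 =>
        alive n k f (j+1) hjk (Fin.snoc w v)).card := by
  unfold qq
  rw [Finset.card_filter]
  rw [sum_snoc (fun x : Fin (j+1) → Fin n → ZMod 2 =>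
    if alive n k f (j+1) hjk x then 1 else 0)]
  refine Finset.sum_congr rfl fun w _ => ?_
  rw [Finset.card_filter]
lemma zmove : ∀ a b c d : ZMod 2, a + b = c + d → a + c = b + d := by decide

lemma castle_ne {j k : ℕ} (hjk : j < k) (i : Fin j) :
    Fin.castLE hjk.le i ≠ (⟨j, hjk⟩ : Fin k) := by
  apply Fin.ne_of_val_ne
  exact Nat.ne_of_lt i.isLt

lemma dead_iff (n k : ℕ) (f : (Fin n → ZMod 2) → ZMod 2) {j : ℕ} (hjk : j < k)
    (w : Fin j → Fin n → ZMod 2) (v : Fin n → ZMod 2) :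
    ¬ alive n k f (j+1) hjk (Fin.snoc w v) ↔
      ∀ u : Fin k → Fin n → ZMod 2, (∀ i : Fin j, u (Fin.castLE hjk.le i) = w i) →
        u ⟨j, hjk⟩ = v → testSum n k f 0 u = 0 := by
  rw [alive_snoc_iff]
  push_neg
  rfl

lemma hpre_update (n k : ℕ) {j : ℕ} (hjk : j < k) (w : Fin j → Fin n → ZMod 2)
    (u : Fin k → Fin n → ZMod 2) (v' : Fin n → ZMod 2)
    (hu : ∀ i : Fin j, u (Fin.castLE hjk.le i) = w i) :
    ∀ i : Fin j, (Function.update u ⟨j, hjk⟩ v') (Fin.castLE hjk.le i) = w i := by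
  intro i
  rw [Function.update_of_ne (castle_ne hjk i)]
  exact hu i

lemma dead_zero (n k : ℕ) (f : (Fin n → ZMod 2) → ZMod 2)
    (hwt : ∀ a, anf n f a ≠ 0 → wt n a ≤ k) {j : ℕ} (hjk : j < k)
    (w : Fin j → Fin n → ZMod 2) :
    ¬ alive n k f (j+1) hjk (Fin.snoc w (0 : Fin n → ZMod 2)) := by
  rw [dead_iff]
  intro u hu hj'
  have h := testSum_update_zero n k f hwt (by omega) u ⟨j, hjk⟩
  have heq : Function.update u ⟨j, hjk⟩ (0 : Fin n → ZMod 2) = u := by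
    rw [← hj']
    exact Function.update_eq_self _ _
  rwa [heq] at h

lemma step_upper (n k : ℕ) (f : (Fin n → ZMod 2) → ZMod 2)
    (hwt : ∀ a, anf n f a ≠ 0 → wt n a ≤ k) {j : ℕ} (hjk : j < k)
    (w : Fin j → Fin n → ZMod 2) :
    (univ.filter fun v : Fin n → ZMod 2 =>
      alive n k f (j+1) hjk (Fin.snoc w v)).card ≤ 2 ^ n - 1 := by
  have hsub : (univ.filter fun v : Fin n → ZMod 2 =>
      alive n k f (j+1) hjk (Fin.snoc w v)) ⊆ univ.erase 0 := by
    intro v hv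
    rw [Finset.mem_filter] at hv
    refine Finset.mem_erase.2 ⟨?_, Finset.mem_univ _⟩
    intro hc
    rw [hc] at hv
    exact dead_zero n k f hwt hjk w hv.2
  have := Finset.card_le_card hsub
  rwa [Finset.card_erase_of_mem (Finset.mem_univ _), Finset.card_univ, card_V] at this

lemma step_last (n k : ℕ) (f : (Fin n → ZMod 2) → ZMod 2)
    (hwt : ∀ a, anf n f a ≠ 0 → wt n a ≤ k) (hn1 : 1 ≤ n) {j : ℕ} (hjk : j < k)
    (hj1 : j + 1 = k) (w : Fin j → Fin n → ZMod 2)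
    (halive : alive n k f j hjk.le w) :
    (univ.filter fun v : Fin n → ZMod 2 =>
      alive n k f (j+1) hjk (Fin.snoc w v)).card = 2 ^ (n - 1) := by
  obtain ⟨vs, hpre, hne⟩ := halive
  set jf : Fin k := ⟨j, hjk⟩ with hjf
  set L : (Fin n → ZMod 2) → ZMod 2 :=
    fun v => testSum n k f 0 (Function.update vs jf v) with hL
  have hiff : ∀ v, alive n k f (j+1) hjk (Fin.snoc w v) ↔ L v ≠ 0 := by
    intro v
    rw [alive_snoc_iff]
    constructor
    · rintro ⟨u, hpre', hjv, hne'⟩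
      have hu : u = Function.update vs jf v := by
        funext i
        rcases eq_or_ne i jf with rfl | hij
        · rw [Function.update_self]; exact hjv
        · have hlt : i.val < j := by
            have h1 := i.isLt
            have hne2 : i.val ≠ j := fun hc => hij (Fin.ext hc)
            omega
          rw [Function.update_of_ne hij]
          have h1 := hpre' ⟨i.val, hlt⟩
          have h2 := hpre ⟨i.val, hlt⟩
          have hcast : Fin.castLE hjk.le (⟨i.val, hlt⟩ : Fin j) = i := Fin.ext rfl
          rw [hcast] at h1 h2
          rw [h1, ← h2]
      rwa [hu] at hne'
    · intro hne'
      exact ⟨Function.update vs jf v, hpre_update n k hjk w vs v hpre,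
        Function.update_self _ _ _, hne'⟩
  have hLadd : ∀ x y, L (x + y) = L x + L y :=
    fun x y => testSum_update_add n k f hwt (by omega) vs jf x y
  set v0 := vs jf with hv0def
  have hv0 : L v0 ≠ 0 := by
    rw [hL]
    simp only []
    rw [hv0def, Function.update_eq_self]
    exact hne
  have hv01 : L v0 = 1 := by rcases z_cases (L v0) with h | h; exact absurd h hv0; exact h
  have hvv0 : v0 + v0 = 0 := funext fun t => z_add_self _
  have hbij : (univ.filter fun v => L v ≠ 0).card
      = (univ.filter fun v => ¬ (L v ≠ 0)).card := by
    refine Finset.card_bij' (fun v _ => v + v0) (fun v _ => v + v0) ?_ ?_ ?_ ?_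
    · intro v hv
      rw [Finset.mem_filter] at hv ⊢
      refine ⟨Finset.mem_univ _, ?_⟩
      rw [not_not, hLadd, hv01]
      rcases z_cases (L v) with h | h
      · exact absurd h hv.2
      · rw [h]; exact z_add_self 1
    · intro v hv
      rw [Finset.mem_filter, not_not] at hv
      rw [Finset.mem_filter]
      refine ⟨Finset.mem_univ _, ?_⟩
      rw [hLadd, hv.2, hv01, zero_add]
      decide
    · intro v _
      show v + v0 + v0 = v
      rw [add_assoc, hvv0, add_zero]
    · intro v _
      show v + v0 + v0 = v
      rw [add_assoc, hvv0, add_zero]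
  have hsum := Finset.card_filter_add_card_filter_not
    (s := (univ : Finset (Fin n → ZMod 2))) (p := fun v => L v ≠ 0)
  rw [Finset.card_univ, card_V] at hsum
  have hpow : (2:ℕ) ^ n = 2 ^ (n-1) * 2 := by
    have h1 : n - 1 + 1 = n := by omega
    rw [← h1, pow_succ, h1]
  have hfe : (univ.filter fun v : Fin n → ZMod 2 =>
      alive n k f (j+1) hjk (Fin.snoc w v)) = univ.filter fun v => L v ≠ 0 := by
    apply Finset.filter_congr
    intro v _
    exact hiff v
  rw [hfe]
  omega
lemma step_lower (n k : ℕ) (f : (Fin n → ZMod 2) → ZMod 2)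
    (hwt : ∀ a, anf n f a ≠ 0 → wt n a ≤ k) (hkn : k ≤ n) {j : ℕ} (hjk : j < k)
    (w : Fin j → Fin n → ZMod 2) (halive : alive n k f j hjk.le w) :
    2 ^ n - 2 ^ (n - (k - j)) ≤
      (univ.filter fun v : Fin n → ZMod 2 =>
        alive n k f (j+1) hjk (Fin.snoc w v)).card := by
  obtain ⟨vs, hpre, hne⟩ := halive
  set jf : Fin k := ⟨j, hjk⟩ with hjf
  set Dead := univ.filter fun v : Fin n → ZMod 2 =>
    ¬ alive n k f (j+1) hjk (Fin.snoc w v) with hD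
  have hdead : ∀ v, v ∈ Dead ↔
      (∀ u : Fin k → Fin n → ZMod 2, (∀ i : Fin j, u (Fin.castLE hjk.le i) = w i) →
        u jf = v → testSum n k f 0 u = 0) := by
    intro v
    rw [hD, Finset.mem_filter]
    simp only [Finset.mem_univ, true_and]
    exact dead_iff n k f hjk w v
  have hDadd : ∀ v1 v2, v1 ∈ Dead → v2 ∈ Dead → v1 + v2 ∈ Dead := by
    intro v1 v2 h1 h2
    rw [hdead] at h1 h2 ⊢
    intro u hu hj'
    have heq : testSum n k f 0 u
        = testSum n k f 0 (Function.update u jf (v1 + v2)) := by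
      rw [← hj', Function.update_eq_self]
    rw [heq, testSum_update_add n k f hwt (by omega) u jf v1 v2,
      h1 _ (hpre_update n k hjk w u v1 hu) (Function.update_self _ _ _),
      h2 _ (hpre_update n k hjk w u v2 hu) (Function.update_self _ _ _), add_zero]
  set b : Fin (k-j) → Fin n → ZMod 2 :=
    fun t => vs ⟨j + t.val, by omega⟩ with hb
  set s : (Fin (k-j) → ZMod 2) → (Fin n → ZMod 2) :=
    fun lam => ∑ t, lam t • b t with hs
  have hslin : ∀ l1 l2, s l1 + s l2 = s (l1 + l2) := by
    intro l1 l2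
    rw [hs]
    simp only []
    rw [← Finset.sum_add_distrib]
    refine Finset.sum_congr rfl fun t _ => ?_
    rw [Pi.add_apply, add_smul]
  have hKey : ∀ lam : Fin (k-j) → ZMod 2, lam ≠ 0 → s lam ∉ Dead := by
    intro lam hlam
    have hex : ∃ t0, lam t0 = 1 := by
      by_contra hc
      push_neg at hc
      apply hlam
      funext t
      rcases z_cases (lam t) with h | h
      · exact h
      · exact absurd h (hc t)
    obtain ⟨t0, ht0⟩ := hex
    set i0 : Fin k := ⟨j + t0.val, by omega⟩ with hi0
    set σ := Equiv.swap jf i0 with hσ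
    set base := vs ∘ σ with hbase
    intro hsD
    rw [hdead] at hsD
    have hpre' : ∀ i : Fin j,
        (Function.update base jf (s lam)) (Fin.castLE hjk.le i) = w i := by
      intro i
      have hne1 : Fin.castLE hjk.le i ≠ jf := castle_ne hjk i
      have hne2 : Fin.castLE hjk.le i ≠ i0 := by
        apply Fin.ne_of_val_ne
        show i.val ≠ j + t0.val
        have := i.isLt
        omega
      rw [Function.update_of_ne hne1, hbase]
      simp only [Function.comp_apply]
      rw [hσ, Equiv.swap_apply_of_ne_of_ne hne1 hne2]
      exact hpre i
    have hzero := hsD (Function.update base jf (s lam)) hpre'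
      (Function.update_self _ _ _)
    apply absurd hzero
    set L : (Fin n → ZMod 2) →+ ZMod 2 := AddMonoidHom.mk'
      (fun v => testSum n k f 0 (Function.update base jf v))
      (fun x y => testSum_update_add n k f hwt (by omega) base jf x y) with hLL
    have hmap : testSum n k f 0 (Function.update base jf (s lam))
        = ∑ t, L (lam t • b t) := by
      show L (s lam) = _
      rw [hs]
      exact map_sum L _ _
    have hterm : ∀ t, L (lam t • b t) = if t = t0 then testSum n k f 0 vs else 0 := by
      intro t
      rcases eq_or_ne t t0 with rfl | htt
      · rw [if_pos rfl, ht0, one_smul]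
        have hb0 : base jf = b t := by
          rw [hbase]
          simp only [Function.comp_apply]
          rw [hσ, Equiv.swap_apply_left]
        show testSum n k f 0 (Function.update base jf (b t)) = _
        rw [← hb0, Function.update_eq_self, hbase]
        exact testSum_perm n k f vs σ
      · rcases z_cases (lam t) with h0 | h1
        · rw [h0, zero_smul, map_zero, if_neg htt]
        · rw [h1, one_smul, if_neg htt]
          set it : Fin k := ⟨j + t.val, by omega⟩ with hit
          have hiti0 : it ≠ i0 := by
            apply Fin.ne_of_val_ne
            show j + t.val ≠ j + t0.val
            have : t.val ≠ t0.val := fun hc => htt (Fin.ext hc)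
            omega
          have hp : σ it ≠ jf := by
            intro hc
            have h2 : σ i0 = jf := Equiv.swap_apply_right jf i0
            exact hiti0 (σ.injective (hc.trans h2.symm))
          show testSum n k f 0 (Function.update base jf (b t)) = 0
          refine testSum_alt n k f _ jf (σ it) (Ne.symm hp) ?_
          rw [Function.update_self, Function.update_of_ne hp]
          rw [hbase]
          simp only [Function.comp_apply]
          rw [Equiv.swap_apply_self]
    rw [hmap]
    simp_rw [hterm]
    rw [Finset.sum_ite_eq' univ t0]
    simp only [Finset.mem_univ, if_true]
    exact hne
  have hcard : Dead.card * 2 ^ (k-j) ≤ 2 ^ n := by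
    have hmaps : ∀ p ∈ Dead ×ˢ (univ : Finset (Fin (k-j) → ZMod 2)),
        p.1 + s p.2 ∈ (univ : Finset (Fin n → ZMod 2)) := fun p _ => Finset.mem_univ _
    have hinj : Set.InjOn (fun p : (Fin n → ZMod 2) × (Fin (k-j) → ZMod 2) => p.1 + s p.2)
        ((Dead ×ˢ (univ : Finset (Fin (k-j) → ZMod 2)) : Finset _) : Set _) := by
      rintro ⟨v1, l1⟩ h1 ⟨v2, l2⟩ h2 heq
      rw [Finset.mem_coe, Finset.mem_product] at h1 h2
      have hv1D : v1 ∈ Dead := h1.1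
      have hv2D : v2 ∈ Dead := h2.1
      simp only [] at heq
      have hvv : v1 + v2 = s l1 + s l2 := by
        funext t
        have := congrFun heq t
        exact zmove _ _ _ _ this
      rw [hslin] at hvv
      have hl : l1 = l2 := by
        by_contra hll
        have hmu : l1 + l2 ≠ 0 := by
          intro hc
          apply hll
          funext t
          have := congrFun hc t
          exact zeq _ _ this
        exact hKey _ hmu (hvv ▸ hDadd v1 v2 hv1D hv2D)
      subst hl
      have hv : v1 = v2 := add_right_cancel heq
      rw [hv]
    have hle := Finset.card_le_card_of_injOn _ hmaps hinj
    rwa [Finset.card_product, Finset.card_univ, card_V, Finset.card_univ, card_V] at hle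
  have hDle : Dead.card ≤ 2 ^ (n - (k - j)) := by
    have hpow : (2:ℕ) ^ n = 2 ^ (n - (k-j)) * 2 ^ (k-j) := by
      rw [← pow_add]
      congr 1
      omega
    rw [hpow] at hcard
    exact Nat.le_of_mul_le_mul_right hcard (by positivity)
  have hsum := Finset.card_filter_add_card_filter_not
    (s := (univ : Finset (Fin n → ZMod 2)))
    (p := fun v => alive n k f (j+1) hjk (Fin.snoc w v))
  rw [Finset.card_univ, card_V, ← hD] at hsum
  omega
lemma dead_card_zero (n k : ℕ) (f : (Fin n → ZMod 2) → ZMod 2) {j : ℕ} (hjk : j < k)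
    (w : Fin j → Fin n → ZMod 2) (hdead : ¬ alive n k f j hjk.le w) :
    (univ.filter fun v : Fin n → ZMod 2 =>
      alive n k f (j+1) hjk (Fin.snoc w v)).card = 0 := by
  rw [Finset.card_eq_zero]
  rw [Finset.filter_eq_empty_iff]
  intro v _
  intro hc
  exact hdead (alive_snoc_implies n k f hjk w v hc)

lemma sum_ite_card {β : Type*} [Fintype β] [DecidableEq β] (P : β → Prop) [DecidablePred P]
    (c : ℕ) : ∑ w : β, (if P w then c else 0) = c * (univ.filter P).card := by
  rw [Finset.sum_ite, Finset.sum_const, Finset.sum_const_zero, add_zero, smul_eq_mul,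
    mul_comm]

lemma q_step_upper (n k : ℕ) (f : (Fin n → ZMod 2) → ZMod 2)
    (hwt : ∀ a, anf n f a ≠ 0 → wt n a ≤ k) {j : ℕ} (hjk : j < k) :
    qq n k f (j+1) hjk ≤ (2 ^ n - 1) * qq n k f j hjk.le := by
  rw [step_split]
  have hb : ∀ w : Fin j → Fin n → ZMod 2,
      (univ.filter fun v : Fin n → ZMod 2 =>
        alive n k f (j+1) hjk (Fin.snoc w v)).card
      ≤ if alive n k f j hjk.le w then 2 ^ n - 1 else 0 := by
    intro w
    split
    · exact step_upper n k f hwt hjk w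
    · next h => rw [dead_card_zero n k f hjk w h]
  calc ∑ w : Fin j → Fin n → ZMod 2, (univ.filter fun v : Fin n → ZMod 2 =>
        alive n k f (j+1) hjk (Fin.snoc w v)).card
      ≤ ∑ w : Fin j → Fin n → ZMod 2, (if alive n k f j hjk.le w then 2 ^ n - 1 else 0) :=
        Finset.sum_le_sum fun w _ => hb w
    _ = (2 ^ n - 1) * qq n k f j hjk.le := sum_ite_card _ _

lemma q_step_lower (n k : ℕ) (f : (Fin n → ZMod 2) → ZMod 2)
    (hwt : ∀ a, anf n f a ≠ 0 → wt n a ≤ k) (hkn : k ≤ n) {j : ℕ} (hjk : j < k) :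
    (2 ^ n - 2 ^ (n - (k - j))) * qq n k f j hjk.le ≤ qq n k f (j+1) hjk := by
  rw [step_split]
  have hb : ∀ w : Fin j → Fin n → ZMod 2,
      (if alive n k f j hjk.le w then 2 ^ n - 2 ^ (n - (k - j)) else 0)
      ≤ (univ.filter fun v : Fin n → ZMod 2 =>
          alive n k f (j+1) hjk (Fin.snoc w v)).card := by
    intro w
    split
    · next h => exact step_lower n k f hwt hkn hjk w h
    · exact Nat.zero_le _
  calc (2 ^ n - 2 ^ (n - (k - j))) * qq n k f j hjk.le
      = ∑ w : Fin j → Fin n → ZMod 2,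
          (if alive n k f j hjk.le w then 2 ^ n - 2 ^ (n - (k - j)) else 0) :=
        (sum_ite_card _ _).symm
    _ ≤ _ := Finset.sum_le_sum fun w _ => hb w

lemma q_step_last (n k : ℕ) (f : (Fin n → ZMod 2) → ZMod 2)
    (hwt : ∀ a, anf n f a ≠ 0 → wt n a ≤ k) (hn1 : 1 ≤ n) {j : ℕ} (hjk : j < k)
    (hj1 : j + 1 = k) :
    qq n k f (j+1) hjk = 2 ^ (n-1) * qq n k f j hjk.le := by
  rw [step_split]
  have hb : ∀ w : Fin j → Fin n → ZMod 2,
      (univ.filter fun v : Fin n → ZMod 2 =>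
        alive n k f (j+1) hjk (Fin.snoc w v)).card
      = if alive n k f j hjk.le w then 2 ^ (n-1) else 0 := by
    intro w
    split
    · next h => exact step_last n k f hwt hn1 hjk hj1 w h
    · next h => exact dead_card_zero n k f hjk w h
  rw [Finset.sum_congr rfl fun w _ => hb w]
  exact sum_ite_card _ _

lemma q_le_pow (n k : ℕ) (f : (Fin n → ZMod 2) → ZMod 2)
    (hwt : ∀ a, anf n f a ≠ 0 → wt n a ≤ k) :
    ∀ j (hj : j ≤ k), qq n k f j hj ≤ (2 ^ n - 1) ^ j := by
  intro j
  induction j with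
  | zero =>
    intro hj
    rw [pow_zero]
    unfold qq
    calc (univ.filter (alive n k f 0 hj)).card ≤ (univ : Finset (Fin 0 → Fin n → ZMod 2)).card :=
        Finset.card_filter_le _ _
      _ = 1 := by rw [Finset.card_univ]; simp
  | succ j ih =>
    intro hj
    have hjk : j < k := hj
    calc qq n k f (j+1) hj ≤ (2 ^ n - 1) * qq n k f j hjk.le := q_step_upper n k f hwt hjk
      _ ≤ (2 ^ n - 1) * (2 ^ n - 1) ^ j := Nat.mul_le_mul_left _ (ih hjk.le)
      _ = (2 ^ n - 1) ^ (j + 1) := by rw [pow_succ, mul_comm]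

lemma q_ge_prod (n k : ℕ) (f : (Fin n → ZMod 2) → ZMod 2)
    (hwt : ∀ a, anf n f a ≠ 0 → wt n a ≤ k) (hkn : k ≤ n)
    (hex : ∃ v, testSum n k f 0 v ≠ 0) :
    ∀ j (hj : j ≤ k),
      (∏ i ∈ Finset.range j, (2 ^ n - 2 ^ (n - (k - i)))) ≤ qq n k f j hj := by
  intro j
  induction j with
  | zero =>
    intro hj
    rw [Finset.prod_range_zero, q_zero n k f hj hex]
  | succ j ih =>
    intro hj
    have hjk : j < k := hj
    calc (∏ i ∈ Finset.range (j+1), (2 ^ n - 2 ^ (n - (k - i))))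
        = (2 ^ n - 2 ^ (n - (k - j))) * ∏ i ∈ Finset.range j, (2 ^ n - 2 ^ (n - (k - i))) := by
          rw [Finset.prod_range_succ, mul_comm]
      _ ≤ (2 ^ n - 2 ^ (n - (k - j))) * qq n k f j hjk.le :=
          Nat.mul_le_mul_left _ (ih hjk.le)
      _ ≤ qq n k f (j+1) hj := q_step_lower n k f hwt hkn hjk

lemma pairs_count (n k : ℕ) (f : (Fin n → ZMod 2) → ZMod 2)
    (hwt : ∀ a, anf n f a ≠ 0 → wt n a ≤ k) :
    (univ.filter (fun p : (Fin n → ZMod 2) × (Fin k → Fin n → ZMod 2) =>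
      testSum n k f p.1 p.2 ≠ 0)).card
    = 2 ^ n * (univ.filter fun v : Fin k → Fin n → ZMod 2 =>
        testSum n k f 0 v ≠ 0).card := by
  rw [Finset.card_filter, Fintype.sum_prod_type]
  have hh : ∀ (u0 : Fin n → ZMod 2) (u : Fin k → Fin n → ZMod 2),
      (if testSum n k f u0 u ≠ 0 then 1 else 0)
        = if testSum n k f 0 u ≠ 0 then 1 else 0 := by
    intro u0 u
    rw [testSum_indep n k f hwt]
  simp_rw [hh]
  rw [Finset.sum_const, ← Finset.card_filter, Finset.card_univ, card_V, smul_eq_mul]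
lemma prod_Icc_one {M : Type*} [CommMonoid M] (g : ℕ → M) :
    ∀ t, ∏ x ∈ Finset.Icc 1 t, g x = ∏ i ∈ Finset.range t, g (i+1) := by
  intro t
  induction t with
  | zero => rw [Finset.range_zero, Finset.prod_empty, Finset.Icc_eq_empty (by omega),
      Finset.prod_empty]
  | succ t ih =>
    rw [Finset.prod_Icc_succ_top (by omega), ih, Finset.prod_range_succ]

lemma real_prod_eq (n m : ℕ) (hkn : m + 1 ≤ n) :
    (∏ i ∈ Finset.Icc 1 (m+1), (1 - 1/2^i : ℝ))
      = ((∏ i ∈ Finset.range (m+1), (2^n - 2^(n - (m+1-i))) : ℕ) : ℝ) / 2^((m+1)*n) := by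
  rw [Nat.cast_prod]
  have hden : (2:ℝ)^((m+1)*n) = ∏ _i ∈ Finset.range (m+1), (2:ℝ)^n := by
    rw [Finset.prod_const, Finset.card_range, ← pow_mul]
    congr 1
    ring
  rw [hden, ← Finset.prod_div_distrib]
  have hfac : ∀ i ∈ Finset.range (m+1),
      ((2^n - 2^(n - (m+1-i)) : ℕ) : ℝ) / (2:ℝ)^n = 1 - 1/2^(m+1-i) := by
    intro i hi
    rw [Finset.mem_range] at hi
    set s := m + 1 - i with hs
    have hle : (2:ℕ)^(n-s) ≤ 2^n := Nat.pow_le_pow_right (by norm_num) (by omega)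
    rw [Nat.cast_sub hle]
    push_cast
    rw [sub_div]
    congr 1
    · rw [div_self (by positivity)]
    · rw [div_eq_div_iff (by positivity) (by positivity), one_mul, ← pow_add]
      congr 1
      omega
  rw [Finset.prod_congr rfl hfac, prod_Icc_one,
    ← Finset.prod_range_reflect (fun j => (1:ℝ) - 1/2^(j+1)) (m+1)]
  refine Finset.prod_congr rfl fun j hj => ?_
  rw [Finset.mem_range] at hj
  have he : m + 1 - 1 - j + 1 = m + 1 - j := by omega
  rw [he]

lemma real_upper_eq (n m : ℕ) (hn1 : 1 ≤ n) :
    ((1:ℝ)/2) * (1 - 1/2^n)^m = ((2^(n-1) * (2^n - 1)^m : ℕ) : ℝ) / 2^((m+1)*n) := by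
  have h1 : (1:ℕ) ≤ 2^n := Nat.one_le_two_pow
  push_cast [Nat.cast_sub h1]
  have hpow : (2:ℝ)^((m+1)*n) = 2^n * (2^n)^m := by
    rw [← pow_mul, ← pow_add]
    congr 1
    ring
  have hn : (2:ℝ)^n = 2 * 2^(n-1) := by
    have h2 : n - 1 + 1 = n := by omega
    conv_lhs => rw [← h2]
    rw [pow_succ]
    ring
  rw [eq_div_iff (by positivity)]
  have hfac : ((1:ℝ) - 1/2^n) * 2^n = 2^n - 1 := by field_simp
  calc ((1:ℝ)/2) * (1 - 1/2^n)^m * 2^((m+1)*n)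
      = (1/2) * 2^n * ((1 - 1/2^n)^m * ((2:ℝ)^n)^m) := by rw [hpow]; ring
    _ = (1/2) * 2^n * (((1:ℝ) - 1/2^n) * 2^n)^m := by rw [mul_pow]
    _ = (1/2) * (2 * 2^(n-1)) * ((2:ℝ)^n - 1)^m := by rw [hfac, ← hn]
    _ = 2^(n-1) * ((2:ℝ)^n - 1)^m := by ring
end DTAux

theorem dt_bounds (n k : ℕ) (hk : 1 ≤ k) (f : (Fin n → ZMod 2) → ZMod 2)
    (hdeg : degree n f = k) :
    (∏ i ∈ Icc 1 k, (1 - 1 / 2 ^ i : ℝ)) ≤ dt n k f ∧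
    dt n k f ≤ (1 / 2) * (1 - 1 / 2 ^ n) ^ (k - 1) := by
  obtain ⟨m, rfl⟩ : ∃ m, k = m + 1 := ⟨k - 1, by omega⟩
  have hwt := DTAux.degree_le n (m+1) f hdeg
  obtain ⟨astar, hanf, hwtk⟩ := DTAux.degree_attained n (m+1) f hdeg hk
  have hkn : m + 1 ≤ n := by
    have h1 : wt n astar ≤ n := by
      unfold wt
      calc (univ.filter fun i => astar i = 1).card
          ≤ (univ : Finset (Fin n)).card := Finset.card_filter_le _ _
        _ = n := by rw [Finset.card_univ, Fintype.card_fin]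
    omega
  have hn1 : 1 ≤ n := by omega
  have hex : ∃ v, testSum n (m+1) f 0 v ≠ 0 := by
    obtain ⟨u, hu⟩ := DTAux.testSum_basis n (m+1) f astar hwtk
    exact ⟨u, by rw [hu]; exact hanf⟩
  set N := (univ.filter fun v : Fin (m+1) → Fin n → ZMod 2 =>
    testSum n (m+1) f 0 v ≠ 0).card with hN
  have hqk : DTAux.qq n (m+1) f (m+1) (le_refl _) = N := DTAux.q_k n (m+1) f (le_refl _)
  have hNup : N ≤ 2^(n-1) * (2^n - 1)^m := by
    have h1 : DTAux.qq n (m+1) f (m+1) (le_refl _)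
        = 2^(n-1) * DTAux.qq n (m+1) f m (Nat.lt_succ_self m).le :=
      DTAux.q_step_last n (m+1) f hwt hn1 (Nat.lt_succ_self m) rfl
    have h2 : DTAux.qq n (m+1) f m (Nat.lt_succ_self m).le ≤ (2^n - 1)^m :=
      DTAux.q_le_pow n (m+1) f hwt m (Nat.le_succ m)
    calc N = 2^(n-1) * DTAux.qq n (m+1) f m (Nat.lt_succ_self m).le := by
          rw [← hqk]; exact h1
      _ ≤ 2^(n-1) * (2^n - 1)^m := Nat.mul_le_mul_left _ h2
  have hNlow : (∏ i ∈ Finset.range (m+1), (2^n - 2^(n - (m+1-i)))) ≤ N := by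
    rw [← hqk]
    exact DTAux.q_ge_prod n (m+1) f hwt hkn hex (m+1) (le_refl _)
  have hdtval : dt n (m+1) f = (N : ℝ) / 2^((m+1)*n) := by
    unfold dt
    rw [DTAux.pairs_count n (m+1) f hwt, ← hN]
    push_cast
    rw [show (m+1+1)*n = n + (m+1)*n from by ring, pow_add]
    rw [mul_div_mul_left _ _ (by positivity : ((2:ℝ)^n) ≠ 0)]
  rw [hdtval]
  constructor
  · rw [DTAux.real_prod_eq n m hkn]
    gcongr

  · rw [show m + 1 - 1 = m from rfl, DTAux.real_upper_eq n m hn1]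
    gcongr
end

section
/- For any f : F_2^n → F_2 of degree exactly k, dt_k(f) = add_k(f) · ∏_{i=n−k+1}^{n} (1 − 1/2^i), where add_k(f) is the average degree-k monomial density of f over its affine equivalence class. -/
open Finset

noncomputable def dd (n k : ℕ) (g : (Fin n → ZMod 2) → ZMod 2) : ℝ :=
  ((univ.filter fun a : Fin n → ZMod 2 => wt n a = k ∧ anf n g a ≠ 0).card : ℝ) / n.choose k

open scoped Classical in
noncomputable def addk (n k : ℕ) (f : (Fin n → ZMod 2) → ZMod 2) : ℝ :=
  (∑ M ∈ univ.filter (fun M : Matrix (Fin n) (Fin n) (ZMod 2) => IsUnit M.det),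
      ∑ v : Fin n → ZMod 2, dd n k (fun x => f (M.mulVec x + v))) /
    ((univ.filter (fun M : Matrix (Fin n) (Fin n) (ZMod 2) => IsUnit M.det)).card * 2 ^ n)


section Aux

open scoped Classical

lemma zmod2_le_iff (z w : ZMod 2) : z.val ≤ w.val ↔ (w = 0 → z = 0) := by revert z w; decide

lemma sum_fin_subset {n k : ℕ} {β : Type*} [AddCommMonoid β] (s : Finset (Fin n))
    (h : s.card = k) (F : Fin n → β) :
    ∑ i ∈ s, F i = ∑ j : Fin k, F (s.orderEmbOfFin h j) := by
  rw [← Finset.sum_attach s (fun i => F i), ← Finset.univ_eq_attach]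
  rw [← (Equiv.sum_comp (s.orderIsoOfFin h).toEquiv (fun i => F (i : Fin n)))]
  apply Finset.sum_congr rfl
  intro j _
  simp [Finset.coe_orderIsoOfFin_apply]

lemma testSum_eq_zero_of_not_li {n k : ℕ} (f : (Fin n → ZMod 2) → ZMod 2)
    (v : Fin n → ZMod 2) (u : Fin k → Fin n → ZMod 2)
    (h : ¬ LinearIndependent (ZMod 2) u) : testSum n k f v u = 0 := by
  obtain ⟨g, hg0, i0, hi0⟩ := Fintype.not_linearIndependent_iff.1 h
  unfold testSum
  apply Finset.sum_involution (fun c _ => c + g)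
  · intro c _
    have : ∑ i, (c + g) i • u i = ∑ i, c i • u i := by
      simp [add_smul, Finset.sum_add_distrib, hg0]
    rw [this, CharTwo.add_self_eq_zero]
  · intro c _ _
    intro hgz
    apply hi0
    have := congrFun hgz i0
    simpa using this
  · intro c _; exact Finset.mem_univ _
  · intro c _; simp [add_assoc, CharTwo.add_self_eq_zero]
    ext j; simp [CharTwo.add_self_eq_zero]

lemma anf_eq_testSum {n k : ℕ} (f : (Fin n → ZMod 2) → ZMod 2) (a : Fin n → ZMod 2)
    (ha : (univ.filter fun i => a i = 1).card = k) (M : Matrix (Fin n) (Fin n) (ZMod 2))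
    (v : Fin n → ZMod 2) :
    anf n (fun x => f (M.mulVec x + v)) a
      = testSum n k f v (fun j i => M i ((univ.filter fun i => a i = 1).orderEmbOfFin ha j)) := by
  set s : Finset (Fin n) := univ.filter fun i => a i = 1 with hs
  set σ : Fin k → Fin n := fun j => s.orderEmbOfFin ha j with hσ
  have hσmem : ∀ j, σ j ∈ s := fun j => by
    rw [hσ]; simp only [← Finset.coe_orderIsoOfFin_apply]; exact (s.orderIsoOfFin ha j).2
  have hσiso : ∀ j, σ j = ((s.orderIsoOfFin ha j : Fin n)) := fun j => by
    simp [hσ, Finset.coe_orderIsoOfFin_apply]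
  have haz : ∀ i, (a i = 0 ↔ i ∉ s) := by
    intro i; simp only [hs, mem_filter, mem_univ, true_and]
    constructor
    · intro h0 h1; rw [h0] at h1; exact one_ne_zero h1.symm
    · intro h1; rcases (by decide : ∀ z : ZMod 2, z = 0 ∨ z = 1) (a i) with h|h
      · exact h
      · exact absurd h h1
  unfold anf testSum
  refine Finset.sum_nbij' (i := fun x => fun j => x (σ j))
    (j := fun c => fun i => if h : i ∈ s then c ((s.orderIsoOfFin ha).symm ⟨i, h⟩) else 0)
    ?_ ?_ ?_ ?_ ?_
  · intro x _; exact mem_univ _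
  · intro c _
    simp only [mem_filter, mem_univ, true_and]
    intro i
    rw [zmod2_le_iff]
    intro h0
    rw [dif_neg ((haz i).1 h0)]
  · intro x hx
    simp only [mem_filter, mem_univ, true_and] at hx
    funext i
    show (if h : i ∈ s then x (σ ((s.orderIsoOfFin ha).symm ⟨i, h⟩)) else 0) = x i
    by_cases h : i ∈ s
    · rw [dif_pos h]
      congr 1
      rw [hσiso, OrderIso.apply_symm_apply]
    · rw [dif_neg h]
      exact ((zmod2_le_iff _ _).1 (hx i) ((haz i).2 h)).symm
  · intro c _
    funext j
    show (if h : σ j ∈ s then c ((s.orderIsoOfFin ha).symm ⟨σ j, h⟩) else 0) = c j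
    rw [dif_pos (hσmem j)]
    congr 1
    rw [OrderIso.symm_apply_eq]
    exact Subtype.ext (hσiso j)
  · intro x hx
    simp only [mem_filter, mem_univ, true_and] at hx
    have hx0 : ∀ i, i ∉ s → x i = 0 := by
      intro i hi
      exact (zmod2_le_iff _ _).1 (hx i) ((haz i).2 hi)
    congr 1
    have hmv : M.mulVec x = ∑ j : Fin k, x (σ j) • (fun i => M i (σ j)) := by
      funext i
      have : M.mulVec x i = ∑ l, M i l * x l := by
        simp [Matrix.mulVec, dotProduct]
      rw [this, Finset.sum_apply]
      rw [← Finset.sum_subset (Finset.subset_univ s)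
        (by intro l _ hl; rw [hx0 l hl, mul_zero])]
      rw [sum_fin_subset s ha (fun l => M i l * x l)]
      apply Finset.sum_congr rfl
      intro j _
      simp only [Pi.smul_apply, smul_eq_mul, hσ]
      ring
    rw [hmv, add_comm]

lemma exists_GL_cols {n k : ℕ} (σ : Fin k → Fin n) (hσ : Function.Injective σ)
    (u : Fin k → Fin n → ZMod 2) (hu : LinearIndependent (ZMod 2) u) :
    ∃ M : Matrix (Fin n) (Fin n) (ZMod 2), IsUnit M.det ∧ ∀ j i, M i (σ j) = u j i := by
  rcases Nat.eq_zero_or_pos n with rfl | hn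
  · exact ⟨1, by simp, fun j => (σ j).elim0⟩
  have hkn : k ≤ n := by
    have := Fintype.card_le_of_injective σ hσ
    simpa using this
  set W : Submodule (ZMod 2) (Fin n → ZMod 2) := Submodule.span (ZMod 2) (Set.range u) with hW
  obtain ⟨W', hcompl⟩ := Submodule.exists_isCompl W
  have hrV : Module.finrank (ZMod 2) (Fin n → ZMod 2) = n := by
    simp [Module.finrank_fintype_fun_eq_card]
  have hrW : Module.finrank (ZMod 2) W = k := by
    rw [hW, finrank_span_eq_card hu]; simp
  have hrW' : Module.finrank (ZMod 2) W' = n - k := by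
    have := Submodule.finrank_add_eq_of_isCompl hcompl
    omega
  let b' : Module.Basis (Fin (n - k)) (ZMod 2) W' :=
    (Module.finBasis (ZMod 2) W').reindex (finCongr hrW')
  let u' : Fin (n - k) → (Fin n → ZMod 2) := fun j => (b' j : Fin n → ZMod 2)
  have hu' : LinearIndependent (ZMod 2) u' :=
    b'.linearIndependent.map' W'.subtype (Submodule.ker_subtype W')
  have hspanu' : Submodule.span (ZMod 2) (Set.range u') = W' := by
    have : Set.range u' = (W'.subtype) '' (Set.range ⇑b') := by
      rw [← Set.range_comp]; rfl
    rw [this, ← Submodule.map_span, Module.Basis.span_eq, Submodule.map_top, Submodule.range_subtype]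
  let t : Finset (Fin n) := univ \ (univ.image σ)
  have ht : t.card = n - k := by
    simp only [t, Finset.card_sdiff_of_subset (Finset.subset_univ _), Finset.card_univ, Fintype.card_fin,
      Finset.card_image_of_injective _ hσ, Finset.card_univ]
  let τ : Fin (n - k) → Fin n := fun j => t.orderEmbOfFin ht j
  have hτmem : ∀ j, τ j ∈ t := fun j => by
    simpa [τ, ← Finset.coe_orderIsoOfFin_apply] using (t.orderIsoOfFin ht j).2
  have hστ : Function.Injective (Sum.elim σ τ) := by
    intro x y hxy
    rcases x with x | x <;> rcases y with y | y
    · exact congrArg Sum.inl (hσ hxy)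
    · exfalso; have := hτmem y
      simp only [Sum.elim_inl, Sum.elim_inr] at hxy
      rw [← hxy] at this
      simp [t] at this
    · exfalso; have := hτmem x
      simp only [Sum.elim_inl, Sum.elim_inr] at hxy
      rw [hxy] at this
      simp [t] at this
    · exact congrArg Sum.inr ((t.orderEmbOfFin ht).injective hxy)
  have hbij : Function.Bijective (Sum.elim σ τ) := by
    rw [Fintype.bijective_iff_injective_and_card]
    refine ⟨hστ, by simp [Fintype.card_sum]; omega⟩
  let e : (Fin k ⊕ Fin (n - k)) ≃ Fin n := Equiv.ofBijective _ hbij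
  let w : Fin n → (Fin n → ZMod 2) := Sum.elim u u' ∘ e.symm
  have hw : LinearIndependent (ZMod 2) w := by
    apply LinearIndependent.comp _ _ e.symm.injective
    exact LinearIndependent.sum_type hu hu' (by rw [← hW, hspanu']; exact hcompl.disjoint)
  have hcard : Fintype.card (Fin n) = Module.finrank (ZMod 2) (Fin n → ZMod 2) := by
    simp [hrV]
  haveI : Nonempty (Fin n) := Fin.pos_iff_nonempty.1 hn
  let b : Module.Basis (Fin n) (ZMod 2) (Fin n → ZMod 2) :=
    basisOfLinearIndependentOfCardEqFinrank hw hcard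
  have hb : ⇑b = w := coe_basisOfLinearIndependentOfCardEqFinrank hw hcard
  haveI := (Pi.basisFun (ZMod 2) (Fin n)).invertibleToMatrix b
  have hM : ∀ i l, ((Pi.basisFun (ZMod 2) (Fin n)).toMatrix (⇑b)) i l = w l i := by
    intro i l
    rw [Module.Basis.coePiBasisFun.toMatrix_eq_transpose, hb]
    rfl
  refine ⟨(Pi.basisFun (ZMod 2) (Fin n)).toMatrix (⇑b), Matrix.isUnit_det_of_invertible _, ?_⟩
  intro j i
  rw [hM]
  have : e.symm (σ j) = Sum.inl j := by
    apply e.injective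
    rw [Equiv.apply_symm_apply]
    rfl
  simp [w, this]

lemma fib_card_const {n k : ℕ} (σ : Fin k → Fin n) (hσ : Function.Injective σ)
    (u u' : Fin k → Fin n → ZMod 2) (hu : LinearIndependent (ZMod 2) u)
    (hu' : LinearIndependent (ZMod 2) u') :
    (univ.filter fun M : Matrix (Fin n) (Fin n) (ZMod 2) =>
        IsUnit M.det ∧ ∀ j i, M i (σ j) = u j i).card
      = (univ.filter fun M : Matrix (Fin n) (Fin n) (ZMod 2) =>
        IsUnit M.det ∧ ∀ j i, M i (σ j) = u' j i).card := by
  obtain ⟨M0, hM0d, hM0⟩ := exists_GL_cols σ hσ u hu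
  obtain ⟨M0', hM0'd, hM0'⟩ := exists_GL_cols σ hσ u' hu'
  have hAkey : ∀ (A B B' : Matrix (Fin n) (Fin n) (ZMod 2)),
      (∀ j m, B m (σ j) = B' m (σ j)) → ∀ j i, (A * B) i (σ j) = (A * B') i (σ j) := by
    intro A B B' h j i
    rw [Matrix.mul_apply, Matrix.mul_apply]
    exact Finset.sum_congr rfl fun m _ => by rw [h j m]
  have main : ∀ (N0 N0' : Matrix (Fin n) (Fin n) (ZMod 2)), IsUnit N0.det → IsUnit N0'.det →
      ∀ (w w' : Fin k → Fin n → ZMod 2), (∀ j i, N0 i (σ j) = w j i) →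
      (∀ j i, N0' i (σ j) = w' j i) →
      ∀ M : Matrix (Fin n) (Fin n) (ZMod 2), IsUnit M.det → (∀ j i, M i (σ j) = w j i) →
        IsUnit ((N0' * N0⁻¹ * M).det) ∧ ∀ j i, (N0' * N0⁻¹ * M) i (σ j) = w' j i := by
    intro N0 N0' hN0 hN0' w w' hw hw' M hMd hMc
    constructor
    · rw [Matrix.det_mul, Matrix.det_mul]
      exact (hN0'.mul (Matrix.isUnit_nonsing_inv_det _ hN0)).mul hMd
    · intro j i
      have h1 : ∀ j m, M m (σ j) = N0 m (σ j) := fun j m => by rw [hMc j m, hw j m]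
      rw [Matrix.mul_assoc]
      have := hAkey (N0' * N0⁻¹) M N0 h1 j i
      rw [Matrix.mul_assoc] at this
      rw [this, Matrix.mul_assoc N0' N0⁻¹ N0, Matrix.nonsing_inv_mul _ hN0, Matrix.mul_one]
      exact hw' j i
  refine Finset.card_nbij' (fun M => M0' * M0⁻¹ * M) (fun M => M0 * M0'⁻¹ * M) ?_ ?_ ?_ ?_
  · intro M hM
    simp only [Finset.mem_coe, mem_filter, mem_univ, true_and] at hM ⊢
    exact main M0 M0' hM0d hM0'd u u' hM0 hM0' M hM.1 hM.2
  · intro M hM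
    simp only [Finset.mem_coe, mem_filter, mem_univ, true_and] at hM ⊢
    exact main M0' M0 hM0'd hM0d u' u hM0' hM0 M hM.1 hM.2
  · intro M _
    show M0 * M0'⁻¹ * (M0' * M0⁻¹ * M) = M
    rw [← Matrix.mul_assoc, ← Matrix.mul_assoc, Matrix.mul_assoc M0 M0'⁻¹ M0',
      Matrix.nonsing_inv_mul _ hM0'd, Matrix.mul_one, Matrix.mul_nonsing_inv _ hM0d,
      Matrix.one_mul]
  · intro M _
    show M0' * M0⁻¹ * (M0 * M0'⁻¹ * M) = M
    rw [← Matrix.mul_assoc, ← Matrix.mul_assoc, Matrix.mul_assoc M0' M0⁻¹ M0,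
      Matrix.nonsing_inv_mul _ hM0d, Matrix.mul_one, Matrix.mul_nonsing_inv _ hM0'd,
      Matrix.one_mul]

lemma card_indep {n k : ℕ} (hkn : k ≤ n) :
    ((univ : Finset (Fin k → Fin n → ZMod 2)).filter
        fun u => LinearIndependent (ZMod 2) u).card
      = ∏ i ∈ range k, (2 ^ n - 2 ^ i) := by
  have h := card_linearIndependent (K := ZMod 2) (V := Fin n → ZMod 2) (k := k)
    (by simpa [Module.finrank_fintype_fun_eq_card] using hkn)
  rw [Nat.card_eq_fintype_card, Fintype.card_subtype] at h
  rw [h]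
  simp only [ZMod.card, Module.finrank_fintype_fun_eq_card, Fintype.card_fin]
  exact Fin.prod_univ_eq_prod_range (fun i => 2 ^ n - 2 ^ i) k

lemma card_wt_eq (n k : ℕ) :
    ((univ : Finset (Fin n → ZMod 2)).filter fun a => wt n a = k).card = n.choose k := by
  have hpc : (Finset.powersetCard k (univ : Finset (Fin n))).card = n.choose k := by
    rw [Finset.card_powersetCard]; simp
  rw [← hpc]
  apply Finset.card_nbij' (i := fun a => univ.filter fun i => a i = 1)
    (j := fun s => fun i => if i ∈ s then 1 else 0)
  · intro a ha
    simp only [Finset.mem_coe, mem_filter, mem_univ, true_and] at ha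
    simp [Finset.mem_powersetCard, ha, wt] at ha ⊢
    exact ha
  · intro s hs
    simp only [Finset.mem_coe, Finset.mem_powersetCard] at hs
    rw [Finset.mem_coe, mem_filter]
    simp only [mem_univ, true_and, wt]
    rw [← hs.2]
    congr 1
    ext i
    simp only [mem_filter, mem_univ, true_and]
    constructor
    · intro h; by_contra hi; rw [if_neg hi] at h; exact one_ne_zero h.symm
    · intro h; rw [if_pos h]
  · intro a _
    funext i
    beta_reduce
    by_cases h : a i = 1
    · rw [if_pos (by simp [h])]; exact h.symm
    · rw [if_neg (by simp [h])]
      rcases (by decide : ∀ z : ZMod 2, z = 0 ∨ z = 1) (a i) with h0|h1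
      · exact h0.symm
      · exact absurd h1 h
  · intro s _
    ext i
    simp only [mem_filter, mem_univ, true_and]
    constructor
    · intro h; by_contra hi; rw [if_neg hi] at h; exact one_ne_zero h.symm
    · intro h; rw [if_pos h]

lemma cols_indep {n k : ℕ} (σ : Fin k → Fin n) (hσ : Function.Injective σ)
    (M : Matrix (Fin n) (Fin n) (ZMod 2)) (hM : IsUnit M.det) :
    LinearIndependent (ZMod 2) (fun j => (fun i => M i (σ j))) := by
  have hstd : LinearIndependent (ZMod 2)
      (fun j => (Pi.single (σ j) (1 : ZMod 2) : Fin n → ZMod 2)) := by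
    have := (Pi.basisFun (ZMod 2) (Fin n)).linearIndependent
    have h2 := this.comp σ hσ
    convert h2 using 1
    funext j
    simp [Pi.basisFun_apply]
  have hker : LinearMap.ker (M.mulVecLin) = ⊥ :=
    LinearMap.ker_eq_bot.2 (by
      rw [Matrix.coe_mulVecLin]
      exact Matrix.mulVec_injective_iff_isUnit.2 ((Matrix.isUnit_iff_isUnit_det M).2 hM))
  have := hstd.map' M.mulVecLin hker
  convert this using 1
  funext j
  rw [Function.comp_apply, Matrix.mulVecLin_apply, Matrix.mulVec_single]
  funext i
  simp [Matrix.col]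
  all_goals rfl

/-- The key per-coefficient counting identity. -/
lemma count_Ta {n k : ℕ} (f : (Fin n → ZMod 2) → ZMod 2) (a : Fin n → ZMod 2)
    (ha : (univ.filter fun i => a i = 1).card = k) :
    (((univ.filter fun M : Matrix (Fin n) (Fin n) (ZMod 2) => IsUnit M.det) ×ˢ
        (univ : Finset (Fin n → ZMod 2))).filter
          (fun p => anf n (fun x => f (p.1.mulVec x + p.2)) a ≠ 0)).card
      * ((univ : Finset (Fin k → Fin n → ZMod 2)).filter
          fun u => LinearIndependent (ZMod 2) u).card
    = ((univ : Finset ((Fin n → ZMod 2) × (Fin k → Fin n → ZMod 2))).filter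
          (fun p => testSum n k f p.1 p.2 ≠ 0)).card
      * (univ.filter fun M : Matrix (Fin n) (Fin n) (ZMod 2) => IsUnit M.det).card := by
  set s : Finset (Fin n) := univ.filter fun i => a i = 1 with hs
  set σ : Fin k → Fin n := fun j => s.orderEmbOfFin ha j with hσdef
  have hσ : Function.Injective σ := (s.orderEmbOfFin ha).injective
  set u0 : Fin k → Fin n → ZMod 2 := fun j i => (1 : Matrix (Fin n) (Fin n) (ZMod 2)) i (σ j)
    with hu0def
  have hu0 : LinearIndependent (ZMod 2) u0 := cols_indep σ hσ 1 (by simp)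
  set Fib : (Fin k → Fin n → ZMod 2) → Finset (Matrix (Fin n) (Fin n) (ZMod 2)) :=
    fun u => univ.filter fun M => IsUnit M.det ∧ ∀ j i, M i (σ j) = u j i with hFib
  set c : ℕ := (Fib u0).card with hc
  have hfibc : ∀ u : Fin k → Fin n → ZMod 2, LinearIndependent (ZMod 2) u →
      (Fib u).card = c := fun u hu => fib_card_const σ hσ u u0 hu hu0
  set GLs := univ.filter fun M : Matrix (Fin n) (Fin n) (ZMod 2) => IsUnit M.det with hGL
  set S := (univ : Finset ((Fin n → ZMod 2) × (Fin k → Fin n → ZMod 2))).filter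
    (fun p => testSum n k f p.1 p.2 ≠ 0) with hSdef
  have hSind : ∀ p ∈ S, LinearIndependent (ZMod 2) p.2 := by
    intro p hp
    by_contra hnot
    rw [hSdef, mem_filter] at hp
    exact hp.2 (testSum_eq_zero_of_not_li f p.1 p.2 hnot)
  set Ta := ((GLs ×ˢ (univ : Finset (Fin n → ZMod 2))).filter
    (fun p => anf n (fun x => f (p.1.mulVec x + p.2)) a ≠ 0)) with hTa
  have hanf : ∀ (M : Matrix (Fin n) (Fin n) (ZMod 2)) (v : Fin n → ZMod 2),
      anf n (fun x => f (M.mulVec x + v)) a = testSum n k f v (fun j i => M i (σ j)) :=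
    fun M v => anf_eq_testSum f a ha M v
  -- Step A1 : Ta.card = S.card * c
  set Ind := (univ : Finset (Fin k → Fin n → ZMod 2)).filter
    (fun u => LinearIndependent (ZMod 2) u) with hInd
  have stepA1 : Ta.card = S.card * c := by
    rw [Finset.card_eq_sum_card_fiberwise
      (f := fun p : Matrix (Fin n) (Fin n) (ZMod 2) × (Fin n → ZMod 2) =>
        ((p.2, fun j i => p.1 i (σ j)) : (Fin n → ZMod 2) × (Fin k → Fin n → ZMod 2)))
      (t := S) ?mem]
    case mem =>
      intro p hp
      simp only [Finset.mem_coe] at hp ⊢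
      rw [hTa, mem_filter] at hp
      rw [hSdef, mem_filter]
      refine ⟨mem_univ _, ?_⟩
      rw [← hanf p.1 p.2]
      exact hp.2
    have hfib : ∀ q ∈ S, (Ta.filter (fun p => ((p.2, fun j i => p.1 i (σ j))
        : (Fin n → ZMod 2) × (Fin k → Fin n → ZMod 2)) = q)).card = c := by
      intro q hq
      have hq2 : LinearIndependent (ZMod 2) q.2 := hSind q hq
      rw [← hfibc q.2 hq2]
      apply Finset.card_nbij' (i := fun p => p.1) (j := fun M => (M, q.1))
      · intro p hp
        simp only [Finset.mem_coe] at hp ⊢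
        rw [mem_filter, hTa, mem_filter, Finset.mem_product, hGL, mem_filter] at hp
        obtain ⟨⟨⟨⟨-, hMd⟩, -⟩, -⟩, hproj⟩ := hp
        rw [hFib, mem_filter]
        refine ⟨mem_univ _, hMd, ?_⟩
        intro j i
        have := congrArg Prod.snd hproj
        exact congrFun (congrFun this j) i
      · intro M hM
        simp only [Finset.mem_coe] at hM ⊢
        rw [hFib, mem_filter] at hM
        obtain ⟨-, hMd, hMc⟩ := hM
        have hcols : (fun j i => M i (σ j)) = q.2 := by
          funext j i; exact hMc j i
        rw [mem_filter, hTa, mem_filter, Finset.mem_product, hGL, mem_filter]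
        refine ⟨⟨⟨⟨mem_univ _, hMd⟩, mem_univ _⟩, ?_⟩, ?_⟩
        · show anf n (fun x => f (M.mulVec x + q.1)) a ≠ 0
          rw [hanf M q.1, hcols]
          rw [hSdef, mem_filter] at hq
          exact hq.2
        · show ((q.1 : Fin n → ZMod 2), fun j i => M i (σ j)) = q
          rw [hcols]
      · intro p hp
        simp only [Finset.mem_coe] at hp
        rw [mem_filter] at hp
        have h1 : p.2 = q.1 := congrArg Prod.fst hp.2
        show (p.1, q.1) = p
        rw [← h1]
      · intro M _; rfl
    rw [Finset.sum_congr rfl hfib, Finset.sum_const, smul_eq_mul]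
  -- Step A2 : GLs.card = Ind.card * c
  have stepA2 : GLs.card = Ind.card * c := by
    rw [Finset.card_eq_sum_card_fiberwise
      (f := fun M : Matrix (Fin n) (Fin n) (ZMod 2) => fun j i => M i (σ j))
      (t := Ind) ?mem2]
    case mem2 =>
      intro M hM
      simp only [Finset.mem_coe] at hM ⊢
      rw [hGL, mem_filter] at hM
      rw [hInd, mem_filter]
      exact ⟨mem_univ _, cols_indep σ hσ M hM.2⟩
    have hfib2 : ∀ u ∈ Ind,
        (GLs.filter (fun M => (fun j i => M i (σ j)) = u)).card = c := by
      intro u hu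
      rw [hInd, mem_filter] at hu
      rw [← hfibc u hu.2]
      congr 1
      rw [hGL, hFib, Finset.filter_filter]
      apply Finset.filter_congr
      intro M _
      constructor
      · rintro ⟨hd, hcols⟩
        exact ⟨hd, fun j i => congrFun (congrFun hcols j) i⟩
      · rintro ⟨hd, hcols⟩
        exact ⟨hd, by funext j i; exact hcols j i⟩
    rw [Finset.sum_congr rfl hfib2, Finset.sum_const, smul_eq_mul]
  rw [stepA1, stepA2]
  ring

end Aux

theorem dt_eq_addk_mul_prod (n k : ℕ) (f : (Fin n → ZMod 2) → ZMod 2)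
    (hdeg : degree n f = k) :
    dt n k f = addk n k f * ∏ i ∈ Icc (n - k + 1) n, (1 - 1 / 2 ^ i : ℝ) := by
  classical
  have hkn : k ≤ n := by
    rw [← hdeg]
    apply Finset.sup_le
    intro a _
    exact le_trans (Finset.card_filter_le _ _) (le_of_eq (by simp))
  set GLs := univ.filter (fun M : Matrix (Fin n) (Fin n) (ZMod 2) => IsUnit M.det) with hGL
  set S := (univ : Finset ((Fin n → ZMod 2) × (Fin k → Fin n → ZMod 2))).filter
    (fun p => testSum n k f p.1 p.2 ≠ 0) with hSdef
  set Ind := (univ : Finset (Fin k → Fin n → ZMod 2)).filter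
    (fun u => LinearIndependent (ZMod 2) u) with hInd
  set Wk := (univ : Finset (Fin n → ZMod 2)).filter (fun a => wt n a = k) with hWk
  set Ta : (Fin n → ZMod 2) → Finset (Matrix (Fin n) (Fin n) (ZMod 2) × (Fin n → ZMod 2)) :=
    fun a => (GLs ×ˢ univ).filter (fun p => anf n (fun x => f (p.1.mulVec x + p.2)) a ≠ 0)
    with hTa
  -- ℕ-level identities
  have hcount : ∀ a ∈ Wk, (Ta a).card * Ind.card = S.card * GLs.card := by
    intro a haw
    rw [hWk, mem_filter] at haw
    exact count_Ta f a haw.2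
  have hnum : ∑ M ∈ GLs, ∑ v : Fin n → ZMod 2,
      (univ.filter fun b => wt n b = k ∧ anf n (fun x => f (M.mulVec x + v)) b ≠ 0).card
      = ∑ a ∈ Wk, (Ta a).card := by
    have inner : ∀ (M : Matrix (Fin n) (Fin n) (ZMod 2)) (v : Fin n → ZMod 2),
        (univ.filter fun b => wt n b = k ∧ anf n (fun x => f (M.mulVec x + v)) b ≠ 0).card
        = ∑ a ∈ Wk, (if anf n (fun x => f (M.mulVec x + v)) a ≠ 0 then 1 else 0) := by
      intro M v
      rw [← Finset.filter_filter, Finset.card_filter]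
    calc ∑ M ∈ GLs, ∑ v : Fin n → ZMod 2,
        (univ.filter fun b => wt n b = k ∧ anf n (fun x => f (M.mulVec x + v)) b ≠ 0).card
        = ∑ M ∈ GLs, ∑ v : Fin n → ZMod 2, ∑ a ∈ Wk,
            (if anf n (fun x => f (M.mulVec x + v)) a ≠ 0 then 1 else 0) := by
          apply Finset.sum_congr rfl; intro M _
          apply Finset.sum_congr rfl; intro v _
          exact inner M v
      _ = ∑ M ∈ GLs, ∑ a ∈ Wk, ∑ v : Fin n → ZMod 2,
            (if anf n (fun x => f (M.mulVec x + v)) a ≠ 0 then 1 else 0) := by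
          apply Finset.sum_congr rfl; intro M _
          rw [Finset.sum_comm]
      _ = ∑ a ∈ Wk, ∑ M ∈ GLs, ∑ v : Fin n → ZMod 2,
            (if anf n (fun x => f (M.mulVec x + v)) a ≠ 0 then 1 else 0) := Finset.sum_comm
      _ = ∑ a ∈ Wk, (Ta a).card := by
          apply Finset.sum_congr rfl; intro a _
          rw [hTa]
          rw [Finset.card_filter, Finset.sum_product]
  -- positivity facts
  have hGLpos : 0 < GLs.card := by
    apply Finset.card_pos.2
    exact ⟨1, by rw [hGL, mem_filter]; simp⟩
  have hIndcard : Ind.card = ∏ i ∈ range k, (2 ^ n - 2 ^ i) := card_indep hkn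
  have hIndpos : 0 < Ind.card := by
    rw [hIndcard]
    apply Finset.prod_pos
    intro i hi
    rw [Finset.mem_range] at hi
    have : (2:ℕ) ^ i < 2 ^ n := Nat.pow_lt_pow_right (by norm_num) (lt_of_lt_of_le hi hkn)
    omega
  have hWcard : Wk.card = n.choose k := card_wt_eq n k
  have hCpos : 0 < n.choose k := Nat.choose_pos hkn
  -- cast to ℝ
  have hIndR : (Ind.card : ℝ) = ∏ i ∈ range k, ((2:ℝ) ^ n - 2 ^ i) := by
    rw [hIndcard, Nat.cast_prod]
    apply Finset.prod_congr rfl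
    intro i hi
    rw [Finset.mem_range] at hi
    rw [Nat.cast_sub (Nat.pow_le_pow_right (by norm_num)
      (le_trans (le_of_lt hi) hkn))]
    push_cast
    ring
  -- the product identity
  have hprod : ∏ i ∈ Icc (n - k + 1) n, (1 - 1 / 2 ^ i : ℝ)
      = (Ind.card : ℝ) / 2 ^ (k * n) := by
    have h1 : ∏ i ∈ Icc (n - k + 1) n, (1 - 1 / 2 ^ i : ℝ)
        = ∏ j ∈ range k, (1 - 1 / 2 ^ (n - j) : ℝ) := by
      apply Finset.prod_nbij' (i := fun x => n - x) (j := fun j => n - j)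
      · intro x hx; rw [Finset.mem_Icc] at hx; rw [Finset.mem_range]; omega
      · intro j hj; rw [Finset.mem_range] at hj; rw [Finset.mem_Icc]; omega
      · intro x hx; rw [Finset.mem_Icc] at hx; omega
      · intro j hj; rw [Finset.mem_range] at hj; omega
      · intro x hx
        rw [Finset.mem_Icc] at hx
        have hix : n - (n - x) = x := by omega
        rw [hix]
    rw [h1, hIndR]
    have h2 : ∀ j ∈ range k, (1 - 1 / 2 ^ (n - j) : ℝ) = ((2:ℝ) ^ n - 2 ^ j) / 2 ^ n := by
      intro j hj
      rw [Finset.mem_range] at hj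
      have hp : (2:ℝ) ^ n = 2 ^ (n - j) * 2 ^ j := by
        rw [← pow_add]; congr 1; omega
      have h2j : (2:ℝ) ^ (n - j) ≠ 0 := by positivity
      have h2j' : (2:ℝ) ^ j ≠ 0 := by positivity
      rw [hp]
      field_simp
    rw [Finset.prod_congr rfl h2, Finset.prod_div_distrib, Finset.prod_const,
      Finset.card_range, ← pow_mul, mul_comm n k]
  -- unfold dt and addk
  have hdt : dt n k f = (S.card : ℝ) / 2 ^ ((k + 1) * n) := rfl
  have haddk : addk n k f
      = ((∑ a ∈ Wk, ((Ta a).card : ℝ)) / (n.choose k)) / (GLs.card * 2 ^ n) := by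
    rw [addk]
    congr 1
    have hdd : ∀ M ∈ GLs, ∑ v : Fin n → ZMod 2, dd n k (fun x => f (M.mulVec x + v))
        = (∑ v : Fin n → ZMod 2,
            ((univ.filter fun b => wt n b = k ∧
              anf n (fun x => f (M.mulVec x + v)) b ≠ 0).card : ℝ)) / (n.choose k) := by
      intro M _
      rw [Finset.sum_div]
      apply Finset.sum_congr rfl
      intro v _
      rw [dd]
    rw [Finset.sum_congr rfl hdd, ← Finset.sum_div]
    congr 1
    rw [show (∑ M ∈ GLs, ∑ v : Fin n → ZMod 2,
        ((univ.filter fun b => wt n b = k ∧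
          anf n (fun x => f (M.mulVec x + v)) b ≠ 0).card : ℝ))
      = ((∑ M ∈ GLs, ∑ v : Fin n → ZMod 2,
        (univ.filter fun b => wt n b = k ∧
          anf n (fun x => f (M.mulVec x + v)) b ≠ 0).card : ℕ) : ℝ) by push_cast; rfl]
    rw [hnum]
    push_cast
    rfl
  -- per-a real identity
  have hI : (Ind.card : ℝ) ≠ 0 := ne_of_gt (by exact_mod_cast hIndpos)
  have hG : (GLs.card : ℝ) ≠ 0 := ne_of_gt (by exact_mod_cast hGLpos)
  have hC : ((n.choose k : ℕ) : ℝ) ≠ 0 := ne_of_gt (by exact_mod_cast hCpos)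
  have hTaR : ∀ a ∈ Wk, ((Ta a).card : ℝ) = (S.card : ℝ) * GLs.card / Ind.card := by
    intro a haw
    have hnat := hcount a haw
    have : ((Ta a).card : ℝ) * Ind.card = (S.card : ℝ) * GLs.card := by exact_mod_cast hnat
    field_simp
    linarith [this]
  rw [hdt, haddk, hprod, Finset.sum_congr rfl hTaR, Finset.sum_const, hWcard, nsmul_eq_mul]
  have hpow : (k + 1) * n = n + k * n := by ring
  rw [hpow, pow_add]
  have h2n : (2:ℝ) ^ n ≠ 0 := by positivity
  have h2kn : (2:ℝ) ^ (k * n) ≠ 0 := by positivity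
  field_simp
end
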